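/- arXiv:2005.11878 — 4 statements merged into one kernel-verified Lean document; each statement's English description precedes it below -/
import Mathlib

section
/- Let σ̄_a(s,d) be defined implicitly by σ^s I_a(s,d) = 1 where I_a(s,d) = E[||φ_a(z)||^s], z ~ N(0,I_d), a ∈ [0,1], d fixed. Then s ↦ σ̄_a(s,d) is strictly decreasing in s on (0,∞). -/
open MeasureTheory ProbabilityTheory

/-- `I_a(s,d) = E[‖φ_a(z)‖^s]` for a standard Gaussian vector `z` in `ℝ^d`. -/
noncomputable def Ia (a s : ℝ) (d : ℕ) : ℝ :=
  ∫ z : Fin d → ℝ, (∑ i, (if 0 < z i then z i else a * z i) ^ 2) ^ (s / 2)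
    ∂(Measure.pi fun _ => gaussianReal 0 1)

namespace IaAux

open Real Set Function

/-- The squared norm of the parametric ReLU image. -/
noncomputable def N (a : ℝ) (d : ℕ) (z : Fin d → ℝ) : ℝ :=
  ∑ i, (if 0 < z i then z i else a * z i) ^ 2

lemma Ia_eq (a s : ℝ) (d : ℕ) :
    Ia a s d = ∫ z, N a d z ^ (s / 2) ∂(Measure.pi fun _ : Fin d => gaussianReal 0 1) := rfl

lemma N_nonneg (a : ℝ) (d : ℕ) (z : Fin d → ℝ) : 0 ≤ N a d z :=
  Finset.sum_nonneg fun _ _ => sq_nonneg _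

lemma measurable_N (a : ℝ) (d : ℕ) : Measurable (N a d) := by
  apply Finset.measurable_sum
  intro i _
  have h1 : Measurable fun x : ℝ => if 0 < x then x else a * x :=
    Measurable.ite (measurableSet_lt measurable_const measurable_id) measurable_id
      (measurable_id.const_mul a)
  exact (h1.comp (measurable_pi_apply i)).pow_const 2

lemma N_le {a : ℝ} (ha0 : 0 ≤ a) (ha1 : a ≤ 1) (d : ℕ) (z : Fin d → ℝ) :
    N a d z ≤ ∑ i, z i ^ 2 := by
  refine Finset.sum_le_sum fun i _ => ?_
  by_cases h : 0 < z i
  · rw [if_pos h]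
  · rw [if_neg h]
    have ha2 : a ^ 2 ≤ 1 := by nlinarith
    calc (a * z i) ^ 2 = a ^ 2 * z i ^ 2 := by ring
      _ ≤ 1 * z i ^ 2 := mul_le_mul_of_nonneg_right ha2 (sq_nonneg _)
      _ = z i ^ 2 := one_mul _

lemma exists_rpow_le_exp (p : ℝ) (hp : 0 ≤ p) :
    ∃ C : ℝ, 0 < C ∧ ∀ y : ℝ, 0 ≤ y → y ^ p ≤ C * rexp (y / 4) := by
  set n := ⌈p⌉₊ with hn
  refine ⟨1 + 4 ^ n * (Nat.factorial n : ℝ), by positivity, fun y hy => ?_⟩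
  have h1 : y ^ p ≤ 1 + y ^ n := by
    rcases le_total y 1 with h | h
    · have := Real.rpow_le_one hy h hp
      have : y ^ p ≤ 1 := this
      nlinarith [pow_nonneg hy n]
    · have h1y : y ^ p ≤ y ^ (n : ℝ) :=
        Real.rpow_le_rpow_of_exponent_le h (Nat.le_ceil p)
      rw [Real.rpow_natCast] at h1y
      linarith
  have h2 : (y / 4) ^ n / (Nat.factorial n : ℝ) ≤ rexp (y / 4) := by
    refine le_trans ?_ (Real.sum_le_exp_of_nonneg (by positivity) (n + 1))
    exact Finset.single_le_sum (f := fun i => (y / 4) ^ i / (Nat.factorial i : ℝ))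
      (fun i _ => by positivity) (Finset.self_mem_range_succ n)
  have h2' : (y / 4) ^ n ≤ (Nat.factorial n : ℝ) * rexp (y / 4) := by
    rw [div_le_iff₀ (by positivity)] at h2
    linarith [h2]
  have h3 : y ^ n = 4 ^ n * (y / 4) ^ n := by
    rw [← mul_pow]
    congr 1
    ring
  have hexp : (1 : ℝ) ≤ rexp (y / 4) := Real.one_le_exp (by positivity)
  calc y ^ p ≤ 1 + y ^ n := h1
    _ = 1 + 4 ^ n * (y / 4) ^ n := by rw [h3]
    _ ≤ rexp (y / 4) + 4 ^ n * ((Nat.factorial n : ℝ) * rexp (y / 4)) := by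
        have h4 : (0:ℝ) < 4 ^ n := by positivity
        nlinarith [h2']
    _ = (1 + 4 ^ n * (Nat.factorial n : ℝ)) * rexp (y / 4) := by ring

lemma integrable_exp_quarter :
    Integrable (fun x : ℝ => rexp (x ^ 2 / 4)) (gaussianReal 0 1) := by
  rw [gaussianReal_of_var_ne_zero 0 one_ne_zero]
  rw [integrable_withDensity_iff (measurable_gaussianPDF 0 1)
    (ae_of_all _ fun x => ENNReal.ofReal_lt_top)]
  have hfun : (fun x : ℝ => rexp (x ^ 2 / 4) * (gaussianPDF 0 1 x).toReal)
      = fun x : ℝ => (Real.sqrt (2 * π))⁻¹ * rexp (-(4 : ℝ)⁻¹ * x ^ 2) := by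
    funext x
    rw [gaussianPDF, ENNReal.toReal_ofReal (gaussianPDFReal_nonneg _ _ _), gaussianPDFReal]
    simp only [NNReal.coe_one, mul_one, sub_zero]
    rw [mul_comm (rexp (x ^ 2 / 4)), mul_assoc, ← Real.exp_add]
    congr 1
    ring
  rw [hfun]
  exact (integrable_exp_neg_mul_sq (by norm_num : (0:ℝ) < 4⁻¹)).const_mul _

lemma integrable_pi_prod (d : ℕ) {f : ℝ → ℝ} (hf : Integrable f (gaussianReal 0 1)) :
    Integrable (fun z : Fin d → ℝ => ∏ i, f (z i))
      (Measure.pi fun _ => gaussianReal 0 1) := by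
  letI : MeasureSpace ℝ := ⟨gaussianReal 0 1⟩
  haveI : SigmaFinite (volume : Measure ℝ) :=
    inferInstanceAs (SigmaFinite (gaussianReal 0 1))
  exact MeasureTheory.Integrable.fintype_prod (𝕜 := ℝ) (fun _ : Fin d => hf)

lemma integrable_rpowN {a : ℝ} (ha0 : 0 ≤ a) (ha1 : a ≤ 1) (d : ℕ) {p : ℝ} (hp : 0 ≤ p) :
    Integrable (fun z : Fin d → ℝ => N a d z ^ p)
      (Measure.pi fun _ => gaussianReal 0 1) := by
  obtain ⟨C, hC, hCle⟩ := exists_rpow_le_exp p hp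
  have hmaj : Integrable (fun z : Fin d → ℝ => C * ∏ i, rexp ((z i) ^ 2 / 4))
      (Measure.pi fun _ => gaussianReal 0 1) :=
    (integrable_pi_prod d integrable_exp_quarter).const_mul C
  refine hmaj.mono' (((measurable_N a d).pow_const _).aestronglyMeasurable)
    (ae_of_all _ fun z => ?_)
  rw [Real.norm_of_nonneg (Real.rpow_nonneg (N_nonneg a d z) p)]
  calc N a d z ^ p ≤ (∑ i, z i ^ 2) ^ p :=
        Real.rpow_le_rpow (N_nonneg a d z) (N_le ha0 ha1 d z) hp
    _ ≤ C * rexp ((∑ i, z i ^ 2) / 4) := hCle _ (by positivity)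
    _ = C * ∏ i, rexp ((z i) ^ 2 / 4) := by
        rw [Finset.sum_div, Real.exp_sum]

lemma gaussianReal_pos {s : Set ℝ} (h : 0 < volume s) : 0 < gaussianReal 0 1 s := by
  rw [gaussianReal_apply 0 one_ne_zero s]
  rw [lintegral_pos_iff_support (measurable_gaussianPDF 0 1)]
  have hsupp : Function.support (gaussianPDF 0 1) = Set.univ :=
    Set.eq_univ_of_forall fun x => (gaussianPDF_pos 0 one_ne_zero x).ne'
  rw [hsupp, Measure.restrict_apply_univ]
  exact h

lemma pi_pos {d : ℕ} {t : Fin d → Set ℝ}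
    (hpos : ∀ i, 0 < gaussianReal 0 1 (t i)) :
    0 < (Measure.pi fun _ : Fin d => gaussianReal 0 1) (Set.pi univ t) := by
  rw [Measure.pi_pi]
  exact CanonicallyOrderedAdd.prod_pos.mpr fun i _ => hpos i

lemma Ia_pos {a : ℝ} (ha0 : 0 ≤ a) (ha1 : a ≤ 1) {d : ℕ} (hd : 0 < d) {s : ℝ}
    (hs : 0 < s) : 0 < Ia a s d := by
  rw [Ia_eq]
  have hint := integrable_rpowN ha0 ha1 d (le_of_lt (by linarith : (0:ℝ) < s / 2))
  rw [integral_pos_iff_support_of_nonneg_ae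
    (ae_of_all _ fun z => Real.rpow_nonneg (N_nonneg a d z) _) hint]
  set i0 : Fin d := ⟨0, hd⟩
  classical
  have hsub : Set.pi univ (fun i => if i = i0 then Ioi (0:ℝ) else univ) ⊆
      Function.support fun z => N a d z ^ (s / 2) := by
    intro z hz
    have hz0 : 0 < z i0 := by
      have := hz i0 (mem_univ _)
      simpa using this
    have hterm : (0:ℝ) < (if 0 < z i0 then z i0 else a * z i0) ^ 2 := by
      rw [if_pos hz0]; positivity
    have hle : (if 0 < z i0 then z i0 else a * z i0) ^ 2 ≤ N a d z :=
      Finset.single_le_sum (f := fun i => (if 0 < z i then z i else a * z i) ^ 2)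
        (fun i _ => sq_nonneg _) (Finset.mem_univ i0)
    exact (Real.rpow_pos_of_pos (lt_of_lt_of_le hterm hle) _).ne'
  refine lt_of_lt_of_le ?_ (measure_mono hsub)
  refine pi_pos fun i => ?_
  by_cases h : i = i0
  · rw [if_pos h]
    exact gaussianReal_pos (by rw [Real.volume_Ioi]; exact ENNReal.zero_lt_top)
  · rw [if_neg h]
    rw [measure_univ]
    norm_num

lemma not_ae_const {a : ℝ} (ha0 : 0 ≤ a) (ha1 : a ≤ 1) {d : ℕ} (hd : 0 < d) {s : ℝ}
    (hs : 0 < s) (c : ℝ) :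
    ¬ ((fun z : Fin d → ℝ => N a d z ^ (s / 2)) =ᵐ[Measure.pi fun _ => gaussianReal 0 1]
        fun _ => c) := by
  intro h
  classical
  set μ : Measure (Fin d → ℝ) := Measure.pi fun _ => gaussianReal 0 1 with hμ
  set i0 : Fin d := ⟨0, hd⟩
  haveI : Nonempty (Fin d) := ⟨i0⟩
  set ε : ℝ := 1 / d with hε
  have hεpos : 0 < ε := by
    rw [hε]
    positivity
  set A : Set (Fin d → ℝ) := Set.pi univ fun _ => Ioo (-ε) ε with hA
  set B : Set (Fin d → ℝ) := Set.pi univ fun i => if i = i0 then Ioi (1:ℝ) else univ with hB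
  have hApos : 0 < μ A := by
    refine pi_pos fun i => gaussianReal_pos ?_
    rw [Real.volume_Ioo]
    rw [ENNReal.ofReal_pos]
    linarith
  have hBpos : 0 < μ B := by
    refine pi_pos fun i => ?_
    by_cases h' : i = i0
    · rw [if_pos h']
      exact gaussianReal_pos (by rw [Real.volume_Ioi]; exact ENNReal.zero_lt_top)
    · rw [if_neg h']
      rw [measure_univ]; norm_num
  have hAlt : ∀ z ∈ A, N a d z ^ (s / 2) < 1 := by
    intro z hz
    have hN1 : N a d z < 1 := by
      have h1 : N a d z ≤ ∑ i, z i ^ 2 := N_le ha0 ha1 d z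
      have h2 : ∑ i, z i ^ 2 < ∑ _i : Fin d, ε ^ 2 := by
        refine Finset.sum_lt_sum_of_nonempty Finset.univ_nonempty fun i _ => ?_
        have hzi := hz i (mem_univ _)
        exact sq_lt_sq' hzi.1 hzi.2
      have h3 : ∑ _i : Fin d, ε ^ 2 = d * ε ^ 2 := by
        rw [Finset.sum_const, Finset.card_univ, Fintype.card_fin, nsmul_eq_mul]
      have h4 : (d : ℝ) * ε ^ 2 ≤ 1 := by
        have hdpos : (0:ℝ) < d := by exact_mod_cast hd
        have hd1 : (1:ℝ) ≤ d := by exact_mod_cast hd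
        rw [hε, div_pow, one_pow, mul_one_div, div_le_one (by positivity)]
        nlinarith
      linarith
    exact Real.rpow_lt_one (N_nonneg a d z) hN1 (by linarith)
  have hBgt : ∀ z ∈ B, 1 < N a d z ^ (s / 2) := by
    intro z hz
    have hz0 : 1 < z i0 := by
      have := hz i0 (mem_univ _)
      simpa using this
    have hterm : (1:ℝ) < (if 0 < z i0 then z i0 else a * z i0) ^ 2 := by
      rw [if_pos (by linarith)]
      nlinarith
    have hle : (if 0 < z i0 then z i0 else a * z i0) ^ 2 ≤ N a d z :=
      Finset.single_le_sum (f := fun i => (if 0 < z i then z i else a * z i) ^ 2)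
        (fun i _ => sq_nonneg _) (Finset.mem_univ i0)
    exact Real.one_lt_rpow (lt_of_lt_of_le hterm hle) (by linarith)
  -- the a.e. equality set
  have hnull : μ {z | ¬ (N a d z ^ (s / 2) = c)} = 0 := by
    have := ae_iff.mp h
    exact this
  set G : Set (Fin d → ℝ) := {z | N a d z ^ (s / 2) = c} with hG
  have hGc : μ Gᶜ = 0 := by
    have : Gᶜ = {z | ¬ (N a d z ^ (s / 2) = c)} := by
      ext z; simp [hG]
    rw [this]; exact hnull
  have hAG : (A ∩ G).Nonempty := by
    refine nonempty_of_measure_ne_zero (μ := μ) ?_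
    rw [measure_inter_conull hGc]
    exact hApos.ne'
  have hBG : (B ∩ G).Nonempty := by
    refine nonempty_of_measure_ne_zero (μ := μ) ?_
    rw [measure_inter_conull hGc]
    exact hBpos.ne'
  obtain ⟨z1, hz1A, hz1G⟩ := hAG
  obtain ⟨z2, hz2B, hz2G⟩ := hBG
  have h1 : c < 1 := hz1G ▸ hAlt z1 hz1A
  have h2 : 1 < c := hz2G ▸ hBgt z2 hz2B
  linarith

end IaAux

open IaAux in
/-- The critical standard deviation `σ̄_a(s,d)`, defined by
`σ^s I_a(s,d) = 1`, i.e. `σ̄_a(s,d) = I_a(s,d)^{-1/s}`, is strictly decreasing in `s`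
on `(0,∞)` for fixed `a ∈ [0,1]` and width `d ≥ 1`. -/
theorem critical_sigma_strictAnti (d : ℕ) (hd : 0 < d) (a : ℝ) (ha0 : 0 ≤ a)
    (ha1 : a ≤ 1) :
    StrictAntiOn (fun s : ℝ => Ia a s d ^ (-1 / s)) (Set.Ioi (0 : ℝ)) := by
  intro s hs t ht hst
  simp only [Set.mem_Ioi] at hs ht
  have hPs : 0 < Ia a s d := Ia_pos ha0 ha1 hd hs
  have hPt : 0 < Ia a t d := Ia_pos ha0 ha1 hd ht
  set μ : Measure (Fin d → ℝ) := Measure.pi fun _ => gaussianReal 0 1 with hμ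
  haveI : IsProbabilityMeasure μ := by
    rw [hμ]; infer_instance
  have hq : 1 < t / s := (one_lt_div hs).mpr hst
  have hcomp : ((fun x : ℝ => x ^ (t / s)) ∘ fun z => N a d z ^ (s / 2))
      = fun z : Fin d → ℝ => N a d z ^ (t / 2) := by
    funext z
    simp only [Function.comp]
    rw [← Real.rpow_mul (N_nonneg a d z)]
    congr 1
    field_simp
  have hgi : Integrable ((fun x : ℝ => x ^ (t / s)) ∘ fun z => N a d z ^ (s / 2)) μ := by
    rw [hcomp]
    exact integrable_rpowN ha0 ha1 d (by positivity : (0:ℝ) ≤ t / 2)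
  have hgc : ContinuousOn (fun x : ℝ => x ^ (t / s)) (Set.Ici 0) := fun x _ =>
    (Real.continuousAt_rpow_const x _ (Or.inr (by positivity))).continuousWithinAt
  have hjensen := (strictConvexOn_rpow hq).ae_eq_const_or_map_average_lt hgc
    isClosed_Ici (ae_of_all _ fun z => Real.rpow_nonneg (N_nonneg a d z) _)
    (integrable_rpowN ha0 ha1 d (by positivity : (0:ℝ) ≤ s / 2)) hgi
  rcases hjensen with hconst | hlt
  · exact absurd hconst (not_ae_const ha0 ha1 hd hs _)
  · rw [average_eq_integral, average_eq_integral] at hlt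
    have hlt2 : (Ia a s d) ^ (t / s) < Ia a t d := by
      rw [Ia_eq, Ia_eq]
      calc (∫ z, N a d z ^ (s / 2) ∂μ) ^ (t / s)
          < ∫ z, ((fun x : ℝ => x ^ (t / s)) ∘ fun z => N a d z ^ (s / 2)) z ∂μ := hlt
        _ = ∫ z, N a d z ^ (t / 2) ∂μ := by rw [hcomp]
    -- final algebra
    show Ia a t d ^ (-1 / t) < Ia a s d ^ (-1 / s)
    have step1 : Ia a s d < Ia a t d ^ (s / t) := by
      have := Real.rpow_lt_rpow (Real.rpow_nonneg hPs.le _) hlt2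
        (by positivity : (0:ℝ) < s / t)
      rw [← Real.rpow_mul hPs.le] at this
      have hexp : t / s * (s / t) = 1 := by field_simp
      rw [hexp, Real.rpow_one] at this
      exact this
    have step2 : (Ia a t d ^ (s / t)) ^ (-1 / s) < Ia a s d ^ (-1 / s) := by
      refine Real.rpow_lt_rpow_of_neg hPs step1 ?_
      rw [neg_div]
      exact neg_neg_of_pos (by positivity)
    rw [← Real.rpow_mul hPt.le] at step2
    have hexp2 : s / t * (-1 / s) = -1 / t := by field_simp
    rw [hexp2] at step2
    exact step2
end

section
/- Consider x^(k+1) = max(W^(k+1) x^(k), 0) with x^(0) ≠ 0, W^(k) having i.i.d. N(0,σ²) entries, σ > 0 arbitrary, and fixed width d. Then x^(k) → 0 almost surely as k → ∞. -/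
open MeasureTheory ProbabilityTheory Filter
open scoped NNReal ENNReal

lemma gaussianReal_Iio_zero {v : ℝ≥0} (hv : v ≠ 0) :
    gaussianReal 0 v (Set.Iio 0) = 1 / 2 := by
  have hmap := gaussianReal_map_const_mul (μ := (0:ℝ)) (v := v) (-1)
  have hvar : (NNReal.mk ((-1:ℝ)^2) (sq_nonneg _) * v : ℝ≥0) = v := by
    apply NNReal.coe_injective
    simp
  rw [hvar, neg_one_mul, neg_zero] at hmap
  have hsym : gaussianReal 0 v (Set.Iio 0) = gaussianReal 0 v (Set.Ioi 0) := by
    conv_rhs => rw [← hmap]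
    rw [Measure.map_apply (by fun_prop) measurableSet_Ioi]
    congr 1
    ext x
    simp
  have h0 : gaussianReal 0 v {(0:ℝ)} = 0 :=
    gaussianReal_absolutelyContinuous 0 hv (measure_singleton 0)
  have htot : gaussianReal 0 v (Set.Iio 0) + gaussianReal 0 v (Set.Ioi 0) = 1 := by
    have h1 : gaussianReal 0 v (Set.Iio 0) + gaussianReal 0 v (Set.Ici 0) = 1 := by
      rw [← measure_union (by simp [Set.disjoint_left]) measurableSet_Ici,
        Set.Iio_union_Ici, measure_univ]
    have h2 : gaussianReal 0 v (Set.Ici 0) = gaussianReal 0 v (Set.Ioi 0) := by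
      have he : Set.Ici (0:ℝ) = {0} ∪ Set.Ioi 0 := by
        ext y
        simp [le_iff_lt_or_eq, or_comm, eq_comm]
      rw [he, measure_union (by simp) measurableSet_Ioi, h0, zero_add]
    rw [← h1, h2]
  have h2a : (2:ℝ≥0∞) * gaussianReal 0 v (Set.Iio 0) = 1 := by
    rw [two_mul]
    rw [hsym] at htot ⊢
    exact htot
  rw [ENNReal.eq_div_iff two_ne_zero ENNReal.ofNat_ne_top]
  exact h2a

/-- For a fully connected ReLU network `x^(k+1) = max(W^(k+1) x^(k), 0)`
with nonzero input `x0`, fixed width `d`, and weight matrices with i.i.d. `N(0,σ²)`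
entries for arbitrary `σ > 0`, the layer outputs converge to `0` almost surely. -/
theorem relu_network_as_to_zero {Ω : Type*} [MeasureSpace Ω]
    [IsProbabilityMeasure (ℙ : Measure Ω)]
    (d : ℕ) (hd : 0 < d) (σ : ℝ≥0) (hσ : 0 < σ)
    (W : ℕ → Ω → Matrix (Fin d) (Fin d) ℝ)
    (hmeas : ∀ k i j, Measurable fun ω => W k ω i j)
    (hindep : iIndepFun
      (fun p : ℕ × Fin d × Fin d => fun ω => W p.1 ω p.2.1 p.2.2) ℙ)
    (hgauss : ∀ k i j, Measure.map (fun ω => W k ω i j) ℙ = gaussianReal 0 (σ ^ 2))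
    (x0 : Fin d → ℝ) (hx0 : x0 ≠ 0)
    (x : ℕ → Ω → Fin d → ℝ) (hxzero : ∀ ω, x 0 ω = x0)
    (hrec : ∀ k ω i, x (k + 1) ω i = max (∑ j, W (k + 1) ω i j * x k ω j) 0) :
    ∀ᵐ ω ∂ℙ, Tendsto (fun k => x k ω) atTop (nhds 0) := by
  classical
  set S : ℕ → Set Ω :=
    fun k => ⋂ q : Fin d × Fin d,
      (fun ω => W (k+1) ω q.1 q.2) ⁻¹' Set.Iio 0 with hSdef
  have hv : (σ^2 : ℝ≥0) ≠ 0 := pow_ne_zero _ hσ.ne'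
  have hone : ∀ p : ℕ × Fin d × Fin d,
      ℙ ((fun ω => W p.1 ω p.2.1 p.2.2) ⁻¹' Set.Iio 0) = 1/2 := by
    intro p
    rw [← Measure.map_apply (hmeas p.1 p.2.1 p.2.2) measurableSet_Iio, hgauss,
      gaussianReal_Iio_zero hv]
  have hSmeas : ∀ k, MeasurableSet (S k) :=
    fun k => MeasurableSet.iInter fun q => hmeas (k+1) q.1 q.2 measurableSet_Iio
  -- product formula for intersections over a finite set of layers
  have hprod : ∀ t : Finset ℕ,
      ℙ (⋂ k ∈ t, S k) = ((1/2 : ℝ≥0∞) ^ (d*d)) ^ t.card := by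
    intro t
    set T : Finset (ℕ × Fin d × Fin d) :=
      (t.image Nat.succ) ×ˢ (Finset.univ : Finset (Fin d × Fin d)) with hT
    have hset : (⋂ p ∈ T, (fun ω => W p.1 ω p.2.1 p.2.2) ⁻¹' Set.Iio 0)
        = ⋂ k ∈ t, S k := by
      ext ω
      simp only [Set.mem_iInter, hT, Finset.mem_product, Finset.mem_image,
        Set.mem_preimage, Set.mem_Iio, Finset.mem_univ, and_true, hSdef]
      constructor
      · intro h k hk
        intro q
        exact h (k+1, q) ⟨k, hk, rfl⟩
      · rintro h ⟨a, q⟩ ⟨k, hk, rfl⟩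
        exact h k hk q
    have h1 := hindep.measure_inter_preimage_eq_mul (S := T)
      (sets := fun _ => Set.Iio 0) (fun p _ => measurableSet_Iio)
    rw [← hset, h1, Finset.prod_congr rfl (fun p _ => hone p), Finset.prod_const,
      hT, Finset.card_product, Finset.card_image_of_injective _ Nat.succ_injective,
      Finset.card_univ, Fintype.card_prod, Fintype.card_fin, mul_comm, pow_mul]
  have hSval : ∀ k, ℙ (S k) = (1/2 : ℝ≥0∞) ^ (d*d) := by
    intro k
    have := hprod {k}
    simpa using this
  have hiIndep : iIndepSet S ℙ := by
    rw [iIndepSet_iff_meas_biInter hSmeas]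
    intro t
    rw [hprod t, Finset.prod_congr rfl fun k _ => hSval k, Finset.prod_const]
  have hsum : (∑' k, ℙ (S k)) = ∞ := by
    simp only [hSval]
    exact ENNReal.tsum_const_eq_top_of_ne_zero
      (pow_ne_zero _ (by norm_num))
  have hBC := measure_limsup_eq_one hSmeas hiIndep hsum
  have hlimmeas : MeasurableSet (limsup S atTop) :=
    MeasurableSet.measurableSet_limsup hSmeas
  have hae : ∀ᵐ ω ∂ℙ, ω ∈ limsup S atTop := by
    rw [ae_iff]
    have hc : {ω | ¬ ω ∈ limsup S atTop} = (limsup S atTop)ᶜ := rfl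
    rw [hc, measure_compl hlimmeas (measure_ne_top _ _), hBC, measure_univ, tsub_self]
  filter_upwards [hae] with ω hω
  rw [mem_limsup_iff_frequently_mem] at hω
  obtain ⟨k, hkS, hk1⟩ := (hω.and_eventually (eventually_ge_atTop 1)).exists
  have hW : ∀ i j, W (k+1) ω i j < 0 := by
    intro i j
    exact Set.mem_iInter.mp hkS (i, j)
  have hnonneg : ∀ i, 0 ≤ x k ω i := by
    obtain ⟨m, rfl⟩ : ∃ m, k = m + 1 := ⟨k-1, (Nat.succ_pred_eq_of_pos hk1).symm⟩
    intro i
    rw [hrec]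
    exact le_max_right _ _
  have hzero : x (k+1) ω = 0 := by
    funext i
    rw [hrec]
    have hsle : (∑ j, W (k+1) ω i j * x k ω j) ≤ 0 := by
      apply Finset.sum_nonpos
      intro j _
      exact mul_nonpos_of_nonpos_of_nonneg (hW i j).le (hnonneg j)
    simp [max_eq_right hsle]
  have hall : ∀ m, x (k+1+m) ω = 0 := by
    intro m
    induction m with
    | zero => exact hzero
    | succ n ih =>
      funext i
      have harith : k+1+(n+1) = (k+1+n)+1 := by ring
      have hcomp : ∀ j, x (k+1+n) ω j = 0 := fun j => congrFun ih j
      rw [harith, hrec]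
      simp [hcomp]
  have hev : (fun m => x m ω) =ᶠ[atTop] (fun _ => 0) := by
    filter_upwards [eventually_ge_atTop (k+1)] with m hm
    obtain ⟨n, rfl⟩ := Nat.exists_eq_add_of_le hm
    exact hall n
  exact Tendsto.congr' hev.symm tendsto_const_nhds
end

section
/- For any real α ∈ (0,1), integers m, ℓ ≥ 0 with m + ℓ = d + 2, and a ∈ (0,1], the integral J = ∫₀^∞ z^{−α} (1+2z)^{−m/2} (1+2a²z)^{−ℓ/2} dz equals 2^{α−1} sum_{k=0}^∞ C(ℓ/2 + k − 1, k) (1−a²)^k B(k+1−α, (m+ℓ)/2 + α − 1), where B is the Beta function and C(r,k) is the generalized binomial coefficient. -/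
open MeasureTheory

/-- The generalized binomial coefficient `C(r,k) = r(r−1)⋯(r−k+1)/k!`. -/
noncomputable def genBinom (r : ℝ) (k : ℕ) : ℝ :=
  (∏ j ∈ Finset.range k, (r - j)) / (Nat.factorial k)

/-- The (real) Beta function `B(x,y) = ∫₀¹ t^{x−1}(1−t)^{y−1} dt`. -/
noncomputable def betaFn (x y : ℝ) : ℝ :=
  ∫ t in Set.Ioo (0 : ℝ) 1, t ^ (x - 1) * (1 - t) ^ (y - 1)

open Set Filter Topology


namespace JB

/-- coefficient of the binomial series for `(1-x)^{-r}` -/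
noncomputable def cc (r : ℝ) (k : ℕ) : ℝ :=
  (∏ i ∈ Finset.range k, (r + i)) / (Nat.factorial k)

lemma cc_nonneg {r : ℝ} (hr : 0 ≤ r) (k : ℕ) : 0 ≤ cc r k := by
  apply div_nonneg _ (by positivity)
  exact Finset.prod_nonneg fun i _ => by positivity

lemma cc_zero (r : ℝ) : cc r 0 = 1 := by simp [cc]

lemma cc_succ (r : ℝ) (k : ℕ) : cc r (k + 1) * (k + 1) = cc r k * (r + k) := by
  have hk : (Nat.factorial k : ℝ) ≠ 0 := by positivity
  have hk1 : ((k:ℝ) + 1) ≠ 0 := by positivity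
  rw [cc, cc, Finset.prod_range_succ, Nat.factorial_succ]
  push_cast
  field_simp

lemma cc_pos {r : ℝ} (hr : 0 < r) (k : ℕ) : 0 < cc r k := by
  apply div_pos _ (by positivity)
  exact Finset.prod_pos fun i _ => by positivity

/-- iterated derivative of `(1-t)^{-r}` -/
lemma iter (r : ℝ) {s : Set ℝ} (hs : UniqueDiffOn ℝ s) (hs1 : s ⊆ Iio 1) (n : ℕ) :
    Set.EqOn (iteratedDerivWithin n (fun t : ℝ => (1 - t) ^ (-r)) s)
      (fun t => (∏ i ∈ Finset.range n, (r + i)) * (1 - t) ^ (-r - n)) s := by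
  induction n with
  | zero =>
    intro t ht
    simp [iteratedDerivWithin_zero]
  | succ n ih =>
    intro t ht
    have h1t : (0:ℝ) < 1 - t := by have := hs1 ht; simp only [mem_Iio] at this; linarith
    rw [iteratedDerivWithin_succ]
    rw [derivWithin_congr ih (ih ht)]
    have hD : HasDerivAt (fun u : ℝ => (∏ i ∈ Finset.range n, (r + i)) * (1 - u) ^ (-r - n))
        ((∏ i ∈ Finset.range n, (r + i)) * ((-1) * (-r - n) * (1 - t) ^ (-r - n - 1))) t := by
      have h1 : HasDerivAt (fun u : ℝ => 1 - u) (-1) t := by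
        simpa using (hasDerivAt_id t).const_sub 1
      exact (h1.rpow_const (Or.inl (ne_of_gt h1t))).const_mul _
    rw [hD.hasDerivWithinAt.derivWithin (hs t ht)]
    rw [Finset.prod_range_succ]
    push_cast
    rw [show -r - (n:ℝ) - 1 = -r - ((n:ℝ) + 1) from by ring]
    ring
/-- The binomial series for `(1-x)^{-r}`. -/
lemma hasSum_binom (r : ℝ) (hr : 0 ≤ r) {x : ℝ} (hx0 : 0 ≤ x) (hx1 : x < 1) :
    HasSum (fun k => cc r k * x ^ k) ((1 - x) ^ (-r)) := by
  rcases eq_or_lt_of_le hx0 with hx0' | hx0'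
  · -- x = 0
    have : ((1:ℝ) - x) ^ (-r) = cc r 0 * x ^ 0 := by
      rw [← hx0']; simp [cc_zero]
    rw [this]
    apply hasSum_single 0
    intro k hk
    rw [← hx0', zero_pow hk, mul_zero]
  rcases eq_or_lt_of_le hr with hr' | hr'
  · -- r = 0
    have hval : ((1:ℝ) - x) ^ (-r) = cc r 0 * x ^ 0 := by
      rw [← hr']; simp [cc_zero]
    rw [hval]
    apply hasSum_single 0
    intro k hk
    have : cc r k = 0 := by
      rw [cc, Finset.prod_eq_zero (Finset.mem_range.2 (Nat.pos_of_ne_zero hk)) (by simp [← hr'])]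
      simp
    simp [this]
  -- main case : 0 < x < 1, 0 < r
  set f : ℝ → ℝ := fun t => (1 - t) ^ (-r) with hf_def
  have h1x : (0:ℝ) < 1 - x := by linarith
  have hIcc : Icc (0:ℝ) x ⊆ Iio 1 := fun t ht => lt_of_le_of_lt ht.2 hx1
  have hud : UniqueDiffOn ℝ (Icc (0:ℝ) x) := uniqueDiffOn_Icc hx0'
  have hiter := iter r hud hIcc
  -- the summand is positive, ratio test gives summability
  have hpos : ∀ k, 0 < cc r k * x ^ k := fun k => mul_pos (cc_pos hr' k) (pow_pos hx0' k)
  have hsummable : Summable (fun k => cc r k * x ^ k) := by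
    apply summable_of_ratio_test_tendsto_lt_one hx1
      (Eventually.of_forall fun n => (hpos n).ne')
    have : (fun n : ℕ => ‖cc r (n+1) * x ^ (n+1)‖ / ‖cc r n * x ^ n‖)
        = fun n : ℕ => ((r - 1) * (1 / ((n:ℝ)+1)) + 1) * x := by
      funext n
      rw [Real.norm_eq_abs, Real.norm_eq_abs, abs_of_pos (hpos _), abs_of_pos (hpos _)]
      rw [div_eq_iff (hpos n).ne']
      have h1 := cc_succ r n
      have hn1 : ((n:ℝ) + 1) ≠ 0 := by positivity
      rw [pow_succ]
      field_simp
      linear_combination h1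
    rw [this]
    have hlim : Tendsto (fun n : ℕ => ((r - 1) * (1 / ((n:ℝ)+1)) + 1) * x)
        atTop (𝓝 (((r - 1) * 0 + 1) * x)) := by
      apply Tendsto.mul_const
      exact (tendsto_one_div_add_atTop_nhds_zero_nat.const_mul (r-1)).add tendsto_const_nhds
    simpa using hlim
  -- the remainder bound
  set b : ℕ → ℝ := fun n => (∏ i ∈ Finset.range (n+1), (r + i)) / (Nat.factorial n)
      * x ^ (n+1) * (1 - x) ^ (-r - 1) with hb_def
  have hbpos : ∀ n, 0 < b n := by
    intro n
    apply mul_pos (mul_pos _ (pow_pos hx0' _)) (Real.rpow_pos_of_pos h1x _)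
    exact div_pos (Finset.prod_pos fun i _ => by positivity) (by positivity)
  have hb0 : Tendsto b atTop (𝓝 0) := by
    apply Summable.tendsto_atTop_zero
    apply summable_of_ratio_test_tendsto_lt_one hx1
      (Eventually.of_forall fun n => (hbpos n).ne')
    have : (fun n : ℕ => ‖b (n+1)‖ / ‖b n‖)
        = fun n : ℕ => (r * (1 / ((n:ℝ)+1)) + 1) * x := by
      funext n
      rw [Real.norm_eq_abs, Real.norm_eq_abs, abs_of_pos (hbpos _), abs_of_pos (hbpos _)]
      rw [div_eq_iff (hbpos n).ne', hb_def]
      simp only []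
      have hn1 : ((n:ℝ) + 1) ≠ 0 := by positivity
      have hfac : (Nat.factorial n : ℝ) ≠ 0 := by positivity
      rw [show n + 1 + 1 = (n+1) + 1 from rfl, Finset.prod_range_succ (n := n+1),
        Nat.factorial_succ]
      push_cast
      rw [pow_succ (n := n + 1)]
      field_simp
    rw [this]
    have hlim : Tendsto (fun n : ℕ => (r * (1 / ((n:ℝ)+1)) + 1) * x)
        atTop (𝓝 ((r * 0 + 1) * x)) := by
      apply Tendsto.mul_const
      exact (tendsto_one_div_add_atTop_nhds_zero_nat.const_mul r).add tendsto_const_nhds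
    simpa using hlim
  -- Taylor remainder estimate
  have hrem : ∀ n : ℕ, |f x - ∑ k ∈ Finset.range (n+1), cc r k * x ^ k| ≤ b n := by
    intro n
    have hcd : ContDiffOn ℝ n f (Icc 0 x) := by
      intro t ht
      have h1t : (1:ℝ) - t ≠ 0 := by
        have := hIcc ht; simp only [mem_Iio] at this
        have h0 : (0:ℝ) < 1 - t := by linarith
        exact h0.ne'
      exact (((contDiff_const.sub contDiff_id).contDiffAt).rpow_const_of_ne
        h1t).contDiffWithinAt
    have hdiff : DifferentiableOn ℝ (iteratedDerivWithin n f (Icc 0 x)) (Ioo 0 x) := by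
      have heq : EqOn (iteratedDerivWithin n f (Icc 0 x))
          (fun t => (∏ i ∈ Finset.range n, (r + i)) * (1 - t) ^ (-r - n)) (Ioo 0 x) :=
        fun t ht => hiter n (Ioo_subset_Icc_self ht)
      apply DifferentiableOn.congr _ heq
      intro t ht
      have h1t : (0:ℝ) < 1 - t := by have := ht.2; linarith
      have h1 : HasDerivAt (fun u : ℝ => 1 - u) (-1) t := by
        simpa using (hasDerivAt_id t).const_sub 1
      exact (((h1.rpow_const (Or.inl h1t.ne')).const_mul
        (∏ i ∈ Finset.range n, (r + (i:ℝ)))).differentiableAt).differentiableWithinAt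
    obtain ⟨x', hx', hR⟩ := taylor_mean_remainder_cauchy hx0'.ne
      (by rwa [uIcc_of_le hx0'.le]) (by rwa [uIcc_of_le hx0'.le, uIoo_of_le hx0'.le])
    rw [uIoo_of_le hx0'.le] at hx'
    rw [uIcc_of_le hx0'.le] at hR
    rw [taylor_within_apply] at hR
    have hx'0 : 0 < x' := hx'.1
    have hx'x : x' < x := hx'.2
    have h1x' : (0:ℝ) < 1 - x' := by linarith
    have hxx' : (0:ℝ) < x - x' := by linarith
    have hsum_eq : ∑ k ∈ Finset.range (n+1), (((Nat.factorial k:ℝ))⁻¹ * (x - 0) ^ k)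
        • iteratedDerivWithin k f (Icc 0 x) 0 = ∑ k ∈ Finset.range (n+1), cc r k * x ^ k := by
      apply Finset.sum_congr rfl
      intro k _
      rw [hiter k (left_mem_Icc.2 hx0'.le)]
      simp only [smul_eq_mul, sub_zero]
      rw [Real.one_rpow, cc]
      ring
    rw [hsum_eq] at hR
    rw [hiter (n+1) (Ioo_subset_Icc_self hx')] at hR
    set A : ℝ := ∏ i ∈ Finset.range (n+1), (r + i) with hA_def
    have hApos : 0 < A := Finset.prod_pos fun i _ => by positivity
    simp only [sub_zero] at hR
    push_cast at hR
    have hexp : (1 - x') ^ (-r - ((n:ℝ)+1)) = (1 - x') ^ (-r-1) * ((1 - x')⁻¹) ^ n := by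
      rw [← Real.rpow_natCast ((1 - x')⁻¹) n, Real.inv_rpow h1x'.le,
        ← Real.rpow_neg h1x'.le, ← Real.rpow_add h1x']
      congr 1
      push_cast
      ring
    rw [hexp] at hR
    rw [hR]
    have hcollect : A * ((1 - x') ^ (-r-1) * ((1 - x')⁻¹) ^ n) * (x - x') ^ n
        / (Nat.factorial n) * x
        = A * ((1 - x') ^ (-r-1) * ((x - x')/(1 - x')) ^ n) / (Nat.factorial n) * x := by
      rw [div_pow, inv_pow]
      ring
    rw [hcollect]
    have hb1 : (1 - x') ^ (-r-1) ≤ (1 - x) ^ (-r-1) :=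
      Real.rpow_le_rpow_of_nonpos h1x (by linarith) (by linarith)
    have hb2 : ((x - x')/(1 - x')) ^ n ≤ x ^ n := by
      apply pow_le_pow_left₀ (by positivity)
      rw [div_le_iff₀ h1x']
      nlinarith
    have habs : |A * ((1 - x') ^ (-r-1) * ((x - x')/(1 - x')) ^ n) / (Nat.factorial n) * x|
        = A * ((1 - x') ^ (-r-1) * ((x - x')/(1 - x')) ^ n) / (Nat.factorial n) * x := by
      apply abs_of_nonneg
      have := Real.rpow_pos_of_pos h1x' (-r-1)
      positivity
    rw [habs]
    calc A * ((1 - x') ^ (-r-1) * ((x - x')/(1 - x')) ^ n) / (Nat.factorial n) * x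
        ≤ A * ((1 - x) ^ (-r-1) * x ^ n) / (Nat.factorial n) * x := by
          gcongr
      _ = b n := by simp only [hb_def]; rw [pow_succ]; ring
  -- conclusion
  have hS1 : Tendsto (fun n => ∑ k ∈ Finset.range (n+1), cc r k * x ^ k) atTop
      (𝓝 (∑' k, cc r k * x ^ k)) :=
    hsummable.hasSum.tendsto_sum_nat.comp (tendsto_add_atTop_nat 1)
  have h0 : Tendsto (fun n => f x - ∑ k ∈ Finset.range (n+1), cc r k * x ^ k) atTop (𝓝 0) :=
    squeeze_zero_norm (fun n => by rw [Real.norm_eq_abs]; exact hrem n) hb0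
  have hS2 : Tendsto (fun n => ∑ k ∈ Finset.range (n+1), cc r k * x ^ k) atTop (𝓝 (f x)) := by
    have := h0.const_sub (f x)
    simpa using this
  have hkey : (∑' k, cc r k * x ^ k) = f x := tendsto_nhds_unique hS1 hS2
  have : ((1:ℝ) - x) ^ (-r) = ∑' k, cc r k * x ^ k := hkey.symm
  rw [this]
  exact hsummable.hasSum
/-- Integrability of the Beta integrand. -/
lemma betaIntegrable {p q : ℝ} (hp : 0 < p) (hq : 0 < q) :
    IntegrableOn (fun t : ℝ => t ^ (p - 1) * (1 - t) ^ (q - 1)) (Ioo 0 1) := by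
  have h := Complex.betaIntegral_convergent (u := (p:ℂ)) (v := (q:ℂ))
    (by simpa using hp) (by simpa using hq)
  rw [intervalIntegrable_iff_integrableOn_Ioo_of_le zero_le_one] at h
  have hn : IntegrableOn (fun x : ℝ => ‖(x:ℂ) ^ ((p:ℂ) - 1) * (1 - (x:ℂ)) ^ ((q:ℂ) - 1)‖)
      (Ioo 0 1) := h.norm
  apply hn.congr_fun ?_ measurableSet_Ioo
  intro t ht
  obtain ⟨ht0, ht1⟩ := ht
  show ‖(t:ℂ) ^ ((p:ℂ) - 1) * (1 - (t:ℂ)) ^ ((q:ℂ) - 1)‖ = t ^ (p - 1) * (1 - t) ^ (q - 1)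
  rw [norm_mul]
  rw [show (1:ℂ) - (t:ℂ) = ((1 - t : ℝ) : ℂ) from by push_cast; ring]
  rw [Complex.norm_cpow_eq_rpow_re_of_pos ht0, Complex.norm_cpow_eq_rpow_re_of_pos (by linarith)]
  norm_num

lemma betaFn_nonneg (p q : ℝ) :
    0 ≤ ∫ t in Ioo (0:ℝ) 1, t ^ (p - 1) * (1 - t) ^ (q - 1) := by
  apply setIntegral_nonneg measurableSet_Ioo
  intro t ht
  have h0 := ht.1
  have h1 : (0:ℝ) < 1 - t := by linarith [ht.2]
  positivity

/-- the substitution map and its properties -/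
lemma phi_image : (fun t : ℝ => t / (2 * (1 - t))) '' Ioo 0 1 = Ioi 0 := by
  ext z
  constructor
  · rintro ⟨t, ⟨ht0, ht1⟩, rfl⟩
    have h1t : (0:ℝ) < 1 - t := by linarith
    exact div_pos ht0 (by linarith)
  · intro hz
    simp only [mem_Ioi] at hz
    refine ⟨2 * z / (1 + 2 * z), ⟨by positivity, ?_⟩, ?_⟩
    · rw [div_lt_one (by linarith)]; linarith
    · have h12z : (0:ℝ) < 1 + 2 * z := by linarith
      field_simp
      ring

lemma phi_inj : InjOn (fun t : ℝ => t / (2 * (1 - t))) (Ioo 0 1) := by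
  intro s hs t ht h
  obtain ⟨hs0, hs1⟩ := hs
  obtain ⟨ht0, ht1⟩ := ht
  have h1s : (0:ℝ) < 1 - s := by linarith
  have h1t : (0:ℝ) < 1 - t := by linarith
  field_simp at h
  linarith

lemma phi_deriv {t : ℝ} (ht : t ∈ Ioo (0:ℝ) 1) :
    HasDerivWithinAt (fun t : ℝ => t / (2 * (1 - t))) (2⁻¹ * ((1 - t) ^ 2)⁻¹) (Ioo 0 1) t := by
  obtain ⟨ht0, ht1⟩ := ht
  have h1t : (0:ℝ) < 1 - t := by linarith
  have hd : HasDerivAt (fun t : ℝ => 2 * (1 - t)) (-2) t := by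
    simpa using (((hasDerivAt_id t).const_sub 1).const_mul 2)
  have h := (hasDerivAt_id t).div hd (by positivity)
  simp only [id_eq] at h
  have : (1 * (2 * (1 - t)) - t * -2) / (2 * (1 - t)) ^ 2 = 2⁻¹ * ((1 - t) ^ 2)⁻¹ := by
    field_simp
    ring
  rw [this] at h
  exact h.hasDerivWithinAt

/-- simplification of the substituted integrand -/
lemma subst_integrand (p q : ℝ) {t : ℝ} (ht : t ∈ Ioo (0:ℝ) 1) :
    |2⁻¹ * ((1 - t) ^ 2)⁻¹| *
      ((t / (2 * (1 - t))) ^ (p - 1) * (1 + 2 * (t / (2 * (1 - t)))) ^ (-(p + q)))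
    = 2 ^ (-p) * (t ^ (p - 1) * (1 - t) ^ (q - 1)) := by
  obtain ⟨ht0, ht1⟩ := ht
  have h1t : (0:ℝ) < 1 - t := by linarith
  have e1 : 1 + 2 * (t / (2 * (1 - t))) = (1 - t)⁻¹ := by
    rw [inv_eq_one_div, eq_div_iff h1t.ne']
    field_simp
    ring
  have e2 : (t / (2 * (1 - t))) ^ (p - 1)
      = t ^ (p - 1) * 2 ^ (1 - p) * (1 - t) ^ (1 - p) := by
    rw [Real.div_rpow ht0.le (by positivity), Real.mul_rpow (by norm_num) h1t.le]
    rw [div_eq_mul_inv, mul_inv, ← Real.rpow_neg (by norm_num), ← Real.rpow_neg h1t.le]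
    rw [show -(p-1) = 1 - p from by ring]
    ring
  have e3 : ((1 - t)⁻¹) ^ (-(p + q)) = (1 - t) ^ (p + q) := by
    rw [Real.inv_rpow h1t.le, ← Real.rpow_neg h1t.le, neg_neg]
  rw [e1, e2, e3, abs_of_pos (by positivity)]
  have e4 : ((1 - t) ^ 2)⁻¹ = (1 - t) ^ (-2 : ℝ) := by
    rw [← Real.rpow_natCast (1-t) 2, ← Real.rpow_neg h1t.le]
    norm_num
  have e5 : (2:ℝ)⁻¹ = (2:ℝ) ^ (-1 : ℝ) := by
    rw [← Real.rpow_neg_one]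
  rw [e4, e5]
  calc (2:ℝ) ^ (-1:ℝ) * (1 - t) ^ (-2:ℝ) *
        (t ^ (p - 1) * 2 ^ (1 - p) * (1 - t) ^ (1 - p) * (1 - t) ^ (p + q))
      = ((2:ℝ) ^ (-1:ℝ) * 2 ^ (1 - p)) *
        (t ^ (p - 1) * ((1 - t) ^ (-2:ℝ) * (1 - t) ^ (1 - p) * (1 - t) ^ (p + q))) := by ring
    _ = 2 ^ (-p) * (t ^ (p - 1) * (1 - t) ^ (q - 1)) := by
        rw [← Real.rpow_add (by norm_num : (0:ℝ) < 2), ← Real.rpow_add h1t,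
          ← Real.rpow_add h1t,
          show (-1:ℝ) + (1 - p) = -p from by ring,
          show (-2:ℝ) + (1 - p) + (p + q) = q - 1 from by ring]

/-- Change of variables: value. -/
lemma keyValue (p q : ℝ) :
    ∫ z in Ioi (0:ℝ), z ^ (p - 1) * (1 + 2 * z) ^ (-(p + q))
      = 2 ^ (-p) * ∫ t in Ioo (0:ℝ) 1, t ^ (p - 1) * (1 - t) ^ (q - 1) := by
  rw [← phi_image,
    integral_image_eq_integral_abs_deriv_smul measurableSet_Ioo (fun t ht => phi_deriv ht)
      phi_inj]
  simp only [smul_eq_mul]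
  rw [setIntegral_congr_fun measurableSet_Ioo (fun t ht => subst_integrand p q ht)]
  rw [MeasureTheory.integral_const_mul]

/-- Change of variables: integrability. -/
lemma keyIntegrable {p q : ℝ} (hp : 0 < p) (hq : 0 < q) :
    IntegrableOn (fun z : ℝ => z ^ (p - 1) * (1 + 2 * z) ^ (-(p + q))) (Ioi 0) := by
  rw [← phi_image,
    integrableOn_image_iff_integrableOn_abs_deriv_smul measurableSet_Ioo
      (fun t ht => phi_deriv ht) phi_inj]
  have : IntegrableOn (fun t : ℝ => 2 ^ (-p) * (t ^ (p - 1) * (1 - t) ^ (q - 1))) (Ioo 0 1) :=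
    (betaIntegrable hp hq).const_mul _
  apply this.congr_fun ?_ measurableSet_Ioo
  intro t ht
  simp only [smul_eq_mul]
  exact (subst_integrand p q ht).symm
lemma genBinom_eq (r : ℝ) (k : ℕ) : genBinom (r + k - 1) k = cc r k := by
  rw [genBinom, cc]
  congr 1
  rw [← Finset.prod_range_reflect]
  apply Finset.prod_congr rfl
  intro j hj
  rw [Finset.mem_range] at hj
  have hj1 : j ≤ k - 1 := by omega
  have hk1 : 1 ≤ k := by omega
  rw [Nat.cast_sub hj1, Nat.cast_sub hk1]
  push_cast
  ring

lemma betaFn_nonneg' (p q : ℝ) : 0 ≤ betaFn p q := by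
  rw [betaFn]
  apply setIntegral_nonneg measurableSet_Ioo
  intro t ht
  have h0 := ht.1
  have h1 : (0:ℝ) < 1 - t := by linarith [ht.2]
  positivity

lemma betaFn_mono {x x' q : ℝ} (hx' : 0 < x') (hx : x' ≤ x) (hq : 0 < q) :
    betaFn x q ≤ betaFn x' q := by
  rw [betaFn, betaFn]
  apply setIntegral_mono_on (betaIntegrable (lt_of_lt_of_le hx' hx) hq)
    (betaIntegrable hx' hq) measurableSet_Ioo
  intro t ht
  have h1 : (0:ℝ) < 1 - t := by linarith [ht.2]
  apply mul_le_mul_of_nonneg_right _ (Real.rpow_nonneg h1.le _)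
  exact Real.rpow_le_rpow_of_exponent_ge ht.1 ht.2.le (by linarith)

lemma keyValue' (p q : ℝ) :
    ∫ z in Ioi (0:ℝ), z ^ (p - 1) * (1 + 2 * z) ^ (-(p + q)) = 2 ^ (-p) * betaFn p q :=
  keyValue p q

end JB

open JB


/-- For `α ∈ (0,1)`, `m + ℓ = d + 2` and `a ∈ (0,1]`,
`∫₀^∞ z^{−α}(1+2z)^{−m/2}(1+2a²z)^{−ℓ/2} dz
  = 2^{α−1} ∑_{k≥0} C(ℓ/2+k−1, k) (1−a²)^k B(k+1−α, (m+ℓ)/2+α−1)`. -/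
theorem J_integral_series (α : ℝ) (hα0 : 0 < α) (hα1 : α < 1)
    (d m ℓ : ℕ) (hml : m + ℓ = d + 2) (a : ℝ) (ha0 : 0 < a) (ha1 : a ≤ 1) :
    (∫ z in Set.Ioi (0 : ℝ),
        z ^ (-α) * (1 + 2 * z) ^ (-(m : ℝ) / 2) * (1 + 2 * a ^ 2 * z) ^ (-(ℓ : ℝ) / 2))
      = 2 ^ (α - 1) * ∑' k : ℕ,
          genBinom ((ℓ : ℝ) / 2 + k - 1) k * (1 - a ^ 2) ^ k *
            betaFn ((k : ℝ) + 1 - α) (((m : ℝ) + ℓ) / 2 + α - 1) := by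
  have hr0 : (0:ℝ) ≤ (ℓ:ℝ)/2 := by positivity
  set r : ℝ := (ℓ:ℝ)/2 with hr_def
  set w : ℝ := 1 - a^2 with hw_def
  set y : ℝ := ((m:ℝ) + ℓ)/2 + α - 1 with hy_def
  have hml' : (m:ℝ) + (ℓ:ℝ) = (d:ℝ) + 2 := by exact_mod_cast hml
  have hy : 0 < y := by
    rw [hy_def, hml']
    have : (0:ℝ) ≤ d := Nat.cast_nonneg d
    linarith
  have hw0 : 0 ≤ w := by nlinarith
  have hw1 : w < 1 := by nlinarith
  have hpk : ∀ k : ℕ, 0 < (k:ℝ) + 1 - α := fun k => by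
    have : (0:ℝ) ≤ k := Nat.cast_nonneg k
    linarith
  set f : ℝ → ℝ := fun z =>
    z ^ (-α) * (1 + 2 * z) ^ (-(m:ℝ) / 2) * (1 + 2 * a ^ 2 * z) ^ (-(ℓ:ℝ) / 2) with hf_def
  set G : ℕ → ℝ → ℝ := fun k z =>
    z ^ ((k:ℝ) + 1 - α - 1) * (1 + 2 * z) ^ (-(((k:ℝ) + 1 - α) + y)) with hG_def
  set C : ℕ → ℝ := fun k => cc r k * w ^ k * 2 ^ k with hC_def
  have hCnn : ∀ k, 0 ≤ C k := fun k =>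
    mul_nonneg (mul_nonneg (cc_nonneg hr0 k) (pow_nonneg hw0 k)) (by positivity)
  have hGnn : ∀ (k : ℕ) {z : ℝ}, z ∈ Ioi (0:ℝ) → 0 ≤ G k z := by
    intro k z hz
    rw [mem_Ioi] at hz
    have h2z : (0:ℝ) < 1 + 2 * z := by linarith
    simp only [hG_def]
    positivity
  -- pointwise expansion
  have hpt : ∀ z : ℝ, z ∈ Ioi (0:ℝ) → HasSum (fun k => C k * G k z) (f z) := by
    intro z hz
    rw [mem_Ioi] at hz
    have h2z : (0:ℝ) < 1 + 2 * z := by linarith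
    have h2az : (0:ℝ) < 1 + 2 * a ^ 2 * z := by nlinarith
    set u : ℝ := 2 * z / (1 + 2 * z) with hu_def
    have hu0 : 0 < u := by positivity
    have hu1 : u < 1 := by rw [hu_def, div_lt_one h2z]; linarith
    have hx0 : 0 ≤ w * u := mul_nonneg hw0 hu0.le
    have hx1 : w * u < 1 := lt_of_le_of_lt (mul_le_of_le_one_right hw0 hu1.le) hw1
    have hbs := (hasSum_binom r hr0 hx0 hx1).mul_left
      (z ^ (-α) * (1 + 2 * z) ^ (-(((m:ℝ) + ℓ) / 2)))
    have hA : z ^ (-α) * (1 + 2 * z) ^ (-(((m:ℝ) + ℓ) / 2)) * ((1 - w * u) ^ (-r)) = f z := by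
      have e0 : 1 - w * u = (1 + 2 * a ^ 2 * z) * (1 + 2 * z)⁻¹ := by
        rw [hu_def, hw_def]
        field_simp
        ring
      have e4 : (1 + 2 * z) ^ (-(((m:ℝ) + ℓ) / 2)) * (1 + 2 * z) ^ r
          = (1 + 2 * z) ^ (-(m:ℝ) / 2) := by
        rw [← Real.rpow_add h2z]
        congr 1
        rw [hr_def]
        ring
      have e5 : (1 - w * u) ^ (-r) = (1 + 2 * a ^ 2 * z) ^ (-(ℓ:ℝ) / 2) * (1 + 2 * z) ^ r := by
        rw [e0, Real.mul_rpow h2az.le (by positivity), Real.inv_rpow h2z.le,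
          Real.rpow_neg h2z.le, inv_inv, show -r = -(ℓ:ℝ)/2 from by rw [hr_def]; ring]
      rw [e5]
      simp only [hf_def]
      linear_combination (z ^ (-α) * (1 + 2 * a ^ 2 * z) ^ (-(ℓ:ℝ) / 2)) * e4
    have heq : (fun k => z ^ (-α) * (1 + 2 * z) ^ (-(((m:ℝ) + ℓ) / 2)) * (cc r k * (w * u) ^ k))
        = fun k => C k * G k z := by
      funext k
      have e1 : (w * u) ^ k = w ^ k * (2 ^ k * z ^ k * ((1 + 2 * z) ^ k)⁻¹) := by
        rw [hu_def, mul_pow, div_pow, mul_pow]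
        ring
      have e2 : z ^ (-α) * z ^ (k:ℕ) = z ^ ((k:ℝ) + 1 - α - 1) := by
        rw [← Real.rpow_natCast z k, ← Real.rpow_add hz]
        congr 1
        ring
      have e3 : (1 + 2 * z) ^ (-(((m:ℝ) + ℓ) / 2)) * (((1 + 2 * z) ^ (k:ℕ))⁻¹)
          = (1 + 2 * z) ^ (-(((k:ℝ) + 1 - α) + y)) := by
        rw [← Real.rpow_natCast (1 + 2 * z) k, ← Real.rpow_neg h2z.le,
          ← Real.rpow_add h2z]
        congr 1
        rw [hy_def]
        ring
      calc z ^ (-α) * (1 + 2 * z) ^ (-(((m:ℝ) + ℓ) / 2)) * (cc r k * (w * u) ^ k)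
          = (cc r k * w ^ k * 2 ^ k) *
            ((z ^ (-α) * z ^ (k:ℕ)) *
              ((1 + 2 * z) ^ (-(((m:ℝ) + ℓ) / 2)) * (((1 + 2 * z) ^ (k:ℕ))⁻¹))) := by
            rw [e1]; ring
        _ = C k * G k z := by rw [e2, e3]
    rw [heq, hA] at hbs
    exact hbs
  -- continuity / measurability
  have hGcont : ∀ k : ℕ, ContinuousOn (fun z => C k * G k z) (Ioi (0:ℝ)) := by
    intro k
    apply continuousOn_const.mul
    apply ContinuousOn.mul
    · intro z hz
      exact (Real.continuousAt_rpow_const z _ (Or.inl (ne_of_gt hz))).continuousWithinAt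
    · intro z hz
      rw [mem_Ioi] at hz
      have h2z : (0:ℝ) < 1 + 2 * z := by linarith
      exact (((continuous_const.add (continuous_const.mul continuous_id)).continuousAt).rpow_const
        (Or.inl h2z.ne')).continuousWithinAt
  have hfcont : ContinuousOn f (Ioi (0:ℝ)) := by
    apply ContinuousOn.mul
    apply ContinuousOn.mul
    · intro z hz
      exact (Real.continuousAt_rpow_const z _ (Or.inl (ne_of_gt hz))).continuousWithinAt
    · intro z hz
      rw [mem_Ioi] at hz
      have h2z : (0:ℝ) < 1 + 2 * z := by linarith
      exact (((continuous_const.add (continuous_const.mul continuous_id)).continuousAt).rpow_const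
        (Or.inl h2z.ne')).continuousWithinAt
    · intro z hz
      rw [mem_Ioi] at hz
      have h2z : (0:ℝ) < 1 + 2 * a ^ 2 * z := by nlinarith
      exact (((continuous_const.add (continuous_const.mul continuous_id)).continuousAt).rpow_const
        (Or.inl h2z.ne')).continuousWithinAt
  have hfm : AEStronglyMeasurable f (volume.restrict (Ioi (0:ℝ))) :=
    hfcont.aestronglyMeasurable measurableSet_Ioi
  have hfnn : 0 ≤ᵐ[volume.restrict (Ioi (0:ℝ))] f := by
    filter_upwards [ae_restrict_mem measurableSet_Ioi] with z hz
    rw [mem_Ioi] at hz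
    have h2z : (0:ℝ) < 1 + 2 * z := by linarith
    have h2az : (0:ℝ) < 1 + 2 * a ^ 2 * z := by nlinarith
    simp only [hf_def]
    positivity
  -- summability of the coefficient series
  have hBnn : ∀ k : ℕ, 0 ≤ betaFn ((k:ℝ) + 1 - α) y := fun k => betaFn_nonneg' _ _
  have hccw : Summable (fun k => cc r k * w ^ k) := (hasSum_binom r hr0 hw0 hw1).summable
  have hsum : Summable (fun k : ℕ => cc r k * w ^ k * betaFn ((k:ℝ) + 1 - α) y) := by
    apply Summable.of_nonneg_of_le
      (fun k => mul_nonneg (mul_nonneg (cc_nonneg hr0 k) (pow_nonneg hw0 k)) (hBnn k))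
      (fun k => ?_) (hccw.mul_right (betaFn (1 - α) y))
    apply mul_le_mul_of_nonneg_left _ (mul_nonneg (cc_nonneg hr0 k) (pow_nonneg hw0 k))
    apply betaFn_mono (by linarith) (by have : (0:ℝ) ≤ k := Nat.cast_nonneg k; linarith) hy
  -- the main computation
  rw [MeasureTheory.integral_eq_lintegral_of_nonneg_ae hfnn hfm]
  have hL : (∫⁻ z in Ioi (0:ℝ), ENNReal.ofReal (f z))
      = ENNReal.ofReal (2 ^ (α - 1) * ∑' k : ℕ, cc r k * w ^ k * betaFn ((k:ℝ) + 1 - α) y) := by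
    calc ∫⁻ z in Ioi (0:ℝ), ENNReal.ofReal (f z)
        = ∫⁻ z in Ioi (0:ℝ), ∑' k : ℕ, ENNReal.ofReal (C k * G k z) := by
          apply lintegral_congr_ae
          filter_upwards [ae_restrict_mem measurableSet_Ioi] with z hz
          rw [← (hpt z hz).tsum_eq]
          exact ENNReal.ofReal_tsum_of_nonneg
            (fun k => mul_nonneg (hCnn k) (hGnn k hz)) (hpt z hz).summable
      _ = ∑' k : ℕ, ∫⁻ z in Ioi (0:ℝ), ENNReal.ofReal (C k * G k z) := by
          apply lintegral_tsum
          intro k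
          exact ENNReal.measurable_ofReal.comp_aemeasurable
            (((hGcont k).aestronglyMeasurable measurableSet_Ioi).aemeasurable)
      _ = ∑' k : ℕ, ENNReal.ofReal (2 ^ (α - 1) *
            (cc r k * w ^ k * betaFn ((k:ℝ) + 1 - α) y)) := by
          apply tsum_congr
          intro k
          have hint : IntegrableOn (fun z => C k * G k z) (Ioi (0:ℝ)) := by
            have := (keyIntegrable (hpk k) hy).const_mul (C k)
            simpa only [hG_def, IntegrableOn] using this
          have hnnk : 0 ≤ᵐ[volume.restrict (Ioi (0:ℝ))] fun z => C k * G k z := by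
            filter_upwards [ae_restrict_mem measurableSet_Ioi] with z hz
            exact mul_nonneg (hCnn k) (hGnn k hz)
          rw [← MeasureTheory.ofReal_integral_eq_lintegral_ofReal hint hnnk]
          congr 1
          rw [MeasureTheory.integral_const_mul]
          have hkv : ∫ z in Ioi (0:ℝ), G k z
              = 2 ^ (-((k:ℝ) + 1 - α)) * betaFn ((k:ℝ) + 1 - α) y := by
            simpa only [hG_def] using keyValue' ((k:ℝ) + 1 - α) y
          rw [hkv]
          have e : (2:ℝ) ^ (k:ℕ) * 2 ^ (-((k:ℝ) + 1 - α)) = 2 ^ (α - 1) := by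
            rw [← Real.rpow_natCast 2 k, ← Real.rpow_add (by norm_num : (0:ℝ) < 2)]
            congr 1
            ring
          calc C k * (2 ^ (-((k:ℝ) + 1 - α)) * betaFn ((k:ℝ) + 1 - α) y)
              = ((2:ℝ) ^ (k:ℕ) * 2 ^ (-((k:ℝ) + 1 - α))) *
                (cc r k * w ^ k * betaFn ((k:ℝ) + 1 - α) y) := by rw [hC_def]; ring
            _ = 2 ^ (α - 1) * (cc r k * w ^ k * betaFn ((k:ℝ) + 1 - α) y) := by rw [e]
      _ = ENNReal.ofReal (2 ^ (α - 1) *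
            ∑' k : ℕ, cc r k * w ^ k * betaFn ((k:ℝ) + 1 - α) y) := by
          rw [← tsum_mul_left]
          rw [ENNReal.ofReal_tsum_of_nonneg
            (fun k => mul_nonneg (by positivity)
              (mul_nonneg (mul_nonneg (cc_nonneg hr0 k) (pow_nonneg hw0 k)) (hBnn k)))
            (hsum.mul_left _)]
  rw [hL, ENNReal.toReal_ofReal]
  · congr 1
    apply tsum_congr
    intro k
    rw [genBinom_eq]
  · apply mul_nonneg (by positivity)
    exact tsum_nonneg fun k =>
      mul_nonneg (mul_nonneg (cc_nonneg hr0 k) (pow_nonneg hw0 k)) (hBnn k)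
end

section
/- Let B_d be a Binomial(d, 1/2) random variable and let F: {0,...,d} → R be given by F(n) = (n/d)^{s/2} for n ≥ 1 with F(0) = 0, for fixed s ∈ (0,2]. Then as d → ∞, E[F(B_d)] = 2^{−s/2}(1 + C(s/2,2)·(1/d) + o(1/d)), where C(s/2,2) = (s/2)(s/2−1)/2. -/
open Polynomial Finset Set Filter


lemma key_nat (d k : ℕ) :
    ∑ n ∈ Finset.range (d+1), d.choose n * n.descFactorial k
      = d.descFactorial k * 2^(d-k) := by
  have h : ((X + 1 : ℕ[X]))^d = ∑ n ∈ Finset.range (d+1), d.choose n • (X:ℕ[X])^n := by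
    rw [add_pow]
    refine Finset.sum_congr rfl fun n _ => ?_
    simp [smul_eq_mul, mul_comm]
  have h2 := congrArg (fun p => Polynomial.eval 1 (derivative^[k] p)) h
  simp only [Polynomial.iterate_derivative_sum, Polynomial.iterate_derivative_smul,
    Polynomial.iterate_derivative_X_pow_eq_smul] at h2
  have h3 : (X + 1 : ℕ[X]) = X + C 1 := by simp
  rw [h3, Polynomial.iterate_derivative_X_add_pow] at h2
  rw [Polynomial.eval_finset_sum] at h2
  simpa [smul_eq_mul, mul_comm, mul_assoc] using h2.symm

lemma key_real (d k : ℕ) (hk : k ≤ d) :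
    ∑ n ∈ Finset.range (d+1), (d.choose n : ℝ) * (n.descFactorial k : ℝ)
      = (d.descFactorial k : ℝ) * 2^d / 2^k := by
  have := congrArg (fun m : ℕ => (m : ℝ)) (key_nat d k)
  push_cast at this
  rw [this]
  rw [pow_sub₀ (2:ℝ) two_ne_zero hk, div_eq_mul_inv, mul_assoc]

lemma df1 (n : ℕ) : (n.descFactorial 1 : ℝ) = n := by simp
lemma df2 (n : ℕ) : (n.descFactorial 2 : ℝ) = n * (n - 1) := by
  match n with
  | 0 => norm_num
  | 1 => norm_num [Nat.descFactorial]
  | (m+2) => simp [Nat.descFactorial]; push_cast; ring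
lemma df3 (n : ℕ) : (n.descFactorial 3 : ℝ) = n * (n - 1) * (n - 2) := by
  match n with
  | 0 => norm_num
  | 1 => norm_num [Nat.descFactorial]
  | 2 => norm_num [Nat.descFactorial]
  | (m+3) => simp [Nat.descFactorial]; push_cast; ring
lemma df4 (n : ℕ) : (n.descFactorial 4 : ℝ) = n * (n - 1) * (n - 2) * (n - 3) := by
  match n with
  | 0 => norm_num
  | 1 => norm_num [Nat.descFactorial]
  | 2 => norm_num [Nat.descFactorial]
  | 3 => norm_num [Nat.descFactorial]
  | (m+4) => simp [Nat.descFactorial]; push_cast; ring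


lemma sumA (d : ℕ) : ∑ n ∈ Finset.range (d+1), (d.choose n : ℝ) = 2^d := by
  have := key_real d 0 (Nat.zero_le d)
  simpa using this

lemma sumB (d : ℕ) (h : 1 ≤ d) :
    ∑ n ∈ Finset.range (d+1), (d.choose n : ℝ) * (n:ℝ) = (d:ℝ) * 2^d / 2 := by
  have := key_real d 1 h
  simp only [df1] at this
  rw [this]; norm_num

lemma sumC (d : ℕ) (h : 2 ≤ d) :
    ∑ n ∈ Finset.range (d+1), (d.choose n : ℝ) * ((n:ℝ)*((n:ℝ)-1))
      = ((d:ℝ)*((d:ℝ)-1)) * 2^d / 4 := by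
  have := key_real d 2 h
  simp only [df2] at this
  rw [this]; norm_num

lemma sumD (d : ℕ) (h : 3 ≤ d) :
    ∑ n ∈ Finset.range (d+1), (d.choose n : ℝ) * ((n:ℝ)*((n:ℝ)-1)*((n:ℝ)-2))
      = ((d:ℝ)*((d:ℝ)-1)*((d:ℝ)-2)) * 2^d / 8 := by
  have := key_real d 3 h
  simp only [df3] at this
  rw [this]; norm_num

lemma sumE (d : ℕ) (h : 4 ≤ d) :
    ∑ n ∈ Finset.range (d+1), (d.choose n : ℝ) * ((n:ℝ)*((n:ℝ)-1)*((n:ℝ)-2)*((n:ℝ)-3))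
      = ((d:ℝ)*((d:ℝ)-1)*((d:ℝ)-2)*((d:ℝ)-3)) * 2^d / 16 := by
  have := key_real d 4 h
  simp only [df4] at this
  rw [this]; norm_num

lemma sumT (d : ℕ) (h : 4 ≤ d) :
    ∑ n ∈ Finset.range (d+1), (d.choose n : ℝ) * ((n:ℝ)/d - 1/2) = 0 := by
  have hd0 : (d:ℝ) ≠ 0 := by exact_mod_cast Nat.cast_ne_zero.mpr (by omega)
  have e : ∀ n ∈ Finset.range (d+1), (d.choose n : ℝ) * ((n:ℝ)/d - 1/2)
      = ((d.choose n : ℝ) * (n:ℝ)) * (1/d) + (d.choose n : ℝ) * (-(1/2)) := by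
    intro n _
    field_simp
    ring
  rw [Finset.sum_congr rfl e, Finset.sum_add_distrib, ← Finset.sum_mul, ← Finset.sum_mul,
    sumB d (by omega), sumA d]
  field_simp
  ring

lemma sumQ (d : ℕ) (h : 4 ≤ d) :
    ∑ n ∈ Finset.range (d+1), (d.choose n : ℝ) * ((n:ℝ)/d - 1/2)^2 = 2^d/(4*(d:ℝ)) := by
  have hd0 : (d:ℝ) ≠ 0 := by exact_mod_cast Nat.cast_ne_zero.mpr (by omega)
  have e : ∀ n ∈ Finset.range (d+1), (d.choose n : ℝ) * ((n:ℝ)/d - 1/2)^2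
      = ((d.choose n : ℝ) * ((n:ℝ)*((n:ℝ)-1))) * (1/d^2)
        + ((d.choose n : ℝ) * (n:ℝ)) * (1/d^2 - 1/d)
        + (d.choose n : ℝ) * (1/4) := by
    intro n _
    field_simp
    ring
  rw [Finset.sum_congr rfl e, Finset.sum_add_distrib, Finset.sum_add_distrib,
    ← Finset.sum_mul, ← Finset.sum_mul, ← Finset.sum_mul,
    sumC d (by omega), sumB d (by omega), sumA d]
  field_simp
  ring

lemma sumF (d : ℕ) (h : 4 ≤ d) :
    ∑ n ∈ Finset.range (d+1), (d.choose n : ℝ) * ((n:ℝ)/d - 1/2)^4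
      = 2^d * (3*(d:ℝ)-2)/(16*(d:ℝ)^3) := by
  have hd0 : (d:ℝ) ≠ 0 := by exact_mod_cast Nat.cast_ne_zero.mpr (by omega)
  have e : ∀ n ∈ Finset.range (d+1), (d.choose n : ℝ) * ((n:ℝ)/d - 1/2)^4
      = ((d.choose n : ℝ) * ((n:ℝ)*((n:ℝ)-1)*((n:ℝ)-2)*((n:ℝ)-3))) * (1/d^4)
        + ((d.choose n : ℝ) * ((n:ℝ)*((n:ℝ)-1)*((n:ℝ)-2))) * (6/d^4 - 2/d^3)
        + ((d.choose n : ℝ) * ((n:ℝ)*((n:ℝ)-1))) * (7/d^4 - 6/d^3 + 3/(2*d^2))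
        + ((d.choose n : ℝ) * (n:ℝ)) * (1/d^4 - 2/d^3 + 3/(2*d^2) - 1/(2*d))
        + (d.choose n : ℝ) * (1/16) := by
    intro n _
    field_simp
    ring
  rw [Finset.sum_congr rfl e, Finset.sum_add_distrib, Finset.sum_add_distrib,
    Finset.sum_add_distrib, Finset.sum_add_distrib,
    ← Finset.sum_mul, ← Finset.sum_mul, ← Finset.sum_mul, ← Finset.sum_mul, ← Finset.sum_mul,
    sumE d h, sumD d (by omega), sumC d (by omega), sumB d (by omega), sumA d]
  field_simp
  ring

lemma hd_shift (β : ℝ) {u : ℝ} (hu : (0:ℝ) < 1/2 + u) :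
    HasDerivAt (fun v : ℝ => (1/2 + v) ^ β) (β * (1/2 + u) ^ (β - 1)) u := by
  have h1 : HasDerivAt (fun v : ℝ => 1/2 + v) 1 u := (hasDerivAt_id u).const_add _
  have h2 := (Real.hasDerivAt_rpow_const (p := β) (Or.inl hu.ne')).comp u h1
  rw [mul_one] at h2
  exact h2

lemma taylor_cubic (α : ℝ) (h0 : 0 < α) (h1 : α ≤ 1) {t : ℝ} (ht : |t| ≤ 1/4) :
    |(1/2 + t) ^ α - ((1/2:ℝ)^α + α*(1/2:ℝ)^(α-1)*t + α*(α-1)*(1/2:ℝ)^(α-2)*t^2/2)|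
      ≤ 128 * |t|^3 := by
  set s : Set ℝ := Set.uIcc 0 t with hs
  have hconv : Convex ℝ s := convex_uIcc 0 t
  have habs : ∀ u ∈ s, |u| ≤ |t| := by
    intro u hu
    rw [hs, Set.mem_uIcc] at hu
    rcases hu with ⟨h1u, h2u⟩ | ⟨h1u, h2u⟩
    · exact abs_le.mpr ⟨by linarith [abs_nonneg t], le_trans h2u (le_abs_self t)⟩
    · exact abs_le.mpr ⟨by linarith [neg_abs_le t], by linarith [abs_nonneg t]⟩
  have hpos : ∀ u ∈ s, (0:ℝ) < 1/2 + u := by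
    intro u hu
    have h := abs_le.mp ((habs u hu).trans ht)
    linarith [h.1]
  set P : ℝ → ℝ := fun u => (1/2:ℝ)^α + α*(1/2:ℝ)^(α-1)*u + α*(α-1)*(1/2:ℝ)^(α-2)*u^2/2 with hP
  set g0 : ℝ → ℝ := fun u => (1/2 + u) ^ α - P u with hg0
  set g1 : ℝ → ℝ := fun u => α*(1/2 + u) ^ (α-1) - (α*(1/2:ℝ)^(α-1) + α*(α-1)*(1/2:ℝ)^(α-2)*u) with hg1
  set g2 : ℝ → ℝ := fun u => α*(α-1)*(1/2 + u) ^ (α-2) - α*(α-1)*(1/2:ℝ)^(α-2) with hg2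
  set g3 : ℝ → ℝ := fun u => α*(α-1)*(α-2)*(1/2 + u) ^ (α-3) with hg3
  have d0 : ∀ u ∈ s, HasDerivWithinAt g0 (g1 u) s u := by
    intro u hu
    have hPd : HasDerivAt P (α*(1/2:ℝ)^(α-1) + α*(α-1)*(1/2:ℝ)^(α-2)*u) u := by
      have h : HasDerivAt P ((0 + α*(1/2:ℝ)^(α-1)*1) + α*(α-1)*(1/2:ℝ)^(α-2)*((2:ℕ)*u^(2-1))/2) u :=
        ((hasDerivAt_const u ((1/2:ℝ)^α)).add
          ((hasDerivAt_id u).const_mul (α*(1/2:ℝ)^(α-1)))).add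
          (((hasDerivAt_pow 2 u).const_mul (α*(α-1)*(1/2:ℝ)^(α-2))).div_const 2)
      convert h using 1
      push_cast; ring
    exact ((hd_shift α (hpos u hu)).sub hPd).hasDerivWithinAt
  have d1 : ∀ u ∈ s, HasDerivWithinAt g1 (g2 u) s u := by
    intro u hu
    have hQ : HasDerivAt (fun v:ℝ => α*(1/2:ℝ)^(α-1) + α*(α-1)*(1/2:ℝ)^(α-2)*v)
        (α*(α-1)*(1/2:ℝ)^(α-2)*1) u :=
      ((hasDerivAt_id u).const_mul (α*(α-1)*(1/2:ℝ)^(α-2))).const_add _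
    have h := (((hd_shift (α-1) (hpos u hu)).const_mul α).sub hQ)
    have : HasDerivAt g1 (α * ((α-1) * (1/2+u)^(α-1-1)) - α*(α-1)*(1/2:ℝ)^(α-2)*1) u := h
    convert this.hasDerivWithinAt using 1
    · rfl
    · rfl
    rw [hg2, show α-1-1 = α-2 by ring]
    ring
  have d2 : ∀ u ∈ s, HasDerivWithinAt g2 (g3 u) s u := by
    intro u hu
    have h := (((hd_shift (α-2) (hpos u hu)).const_mul (α*(α-1))).sub (hasDerivAt_const u (α*(α-1)*(1/2:ℝ)^(α-2))))
    have : HasDerivAt g2 (α*(α-1) * ((α-2) * (1/2+u)^(α-2-1)) - 0) u := h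
    convert this.hasDerivWithinAt using 1
    · rfl
    · rfl
    rw [hg3, show α-2-1 = α-3 by ring]
    ring
  have bound3 : ∀ u ∈ s, ‖g3 u‖ ≤ 128 := by
    intro u hu
    rw [hg3, Real.norm_eq_abs]
    have hpu := hpos u hu
    have h14 : (1/4:ℝ) ≤ 1/2 + u := by
      have h := abs_le.mp ((habs u hu).trans ht); linarith [h.1]
    have hb : (1/2 + u) ^ (α-3) ≤ (1/4:ℝ) ^ (α-3) :=
      Real.rpow_le_rpow_of_nonpos (by norm_num) h14 (by linarith)
    have hb2 : ((1:ℝ)/4) ^ (α-3) ≤ 64 := by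
      rw [Real.rpow_sub (by norm_num : (0:ℝ) < 1/4)]
      have h1' : ((1:ℝ)/4) ^ α ≤ 1 := Real.rpow_le_one (by norm_num) (by norm_num) h0.le
      have h2' : ((1:ℝ)/4) ^ (3:ℝ) = 1/64 := by
        rw [show (3:ℝ) = ((3:ℕ):ℝ) by norm_num, Real.rpow_natCast]; norm_num
      rw [h2']
      rw [div_le_iff₀ (by norm_num)]
      linarith
    have hc : |α*(α-1)*(α-2)| ≤ 2 := by
      rw [abs_mul, abs_mul]
      have a1 : |α| ≤ 1 := abs_le.mpr ⟨by linarith, h1⟩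
      have a2 : |α-1| ≤ 1 := abs_le.mpr ⟨by linarith, by linarith⟩
      have a3 : |α-2| ≤ 2 := abs_le.mpr ⟨by linarith, by linarith⟩
      calc |α| * |α-1| * |α-2| ≤ 1 * 1 * 2 := by
            exact mul_le_mul (mul_le_mul a1 a2 (abs_nonneg _) (by norm_num)) a3 (abs_nonneg _) (by norm_num)
        _ = 2 := by norm_num
    have hpow_pos : (0:ℝ) ≤ (1/2 + u) ^ (α-3) := Real.rpow_nonneg (le_of_lt hpu) _
    calc |α*(α-1)*(α-2)*(1/2 + u) ^ (α-3)| = |α*(α-1)*(α-2)| * (1/2+u)^(α-3) := by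
          rw [abs_mul, abs_of_nonneg hpow_pos]
      _ ≤ 2 * 64 := by
          apply mul_le_mul hc (hb.trans hb2) hpow_pos (by norm_num)
      _ = 128 := by norm_num
  have mem0 : (0:ℝ) ∈ s := Set.left_mem_uIcc
  have memt : t ∈ s := Set.right_mem_uIcc
  -- step A
  have stepA : ∀ u ∈ s, ‖g2 u‖ ≤ 128 * |t| := by
    intro u hu
    have h := hconv.norm_image_sub_le_of_norm_hasDerivWithin_le d2 bound3 mem0 hu
    have hg20 : g2 0 = 0 := by rw [hg2]; norm_num
    rw [hg20, sub_zero, sub_zero] at h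
    calc ‖g2 u‖ ≤ 128 * ‖u‖ := h
      _ ≤ 128 * |t| := by rw [Real.norm_eq_abs]; have := habs u hu; linarith
  have stepB : ∀ u ∈ s, ‖g1 u‖ ≤ 128 * |t| * |t| := by
    intro u hu
    have h := hconv.norm_image_sub_le_of_norm_hasDerivWithin_le d1 stepA mem0 hu
    have hg10 : g1 0 = 0 := by rw [hg1]; norm_num
    rw [hg10, sub_zero, sub_zero] at h
    calc ‖g1 u‖ ≤ 128 * |t| * ‖u‖ := h
      _ ≤ 128 * |t| * |t| := by
          have := habs u hu
          have h4 : (0:ℝ) ≤ 128 * |t| := by positivity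
          rw [Real.norm_eq_abs]
          exact mul_le_mul_of_nonneg_left this h4
  have stepC := hconv.norm_image_sub_le_of_norm_hasDerivWithin_le d0 stepB mem0 memt
  have hg00 : g0 0 = 0 := by rw [hg0, hP]; norm_num
  rw [hg00, sub_zero, sub_zero, Real.norm_eq_abs, Real.norm_eq_abs] at stepC
  calc |g0 t| ≤ 128 * |t| * |t| * |t| := stepC
    _ = 128 * |t|^3 := by ring
lemma unif_bound (α : ℝ) (h0 : 0 < α) (h1 : α ≤ 1) {x : ℝ} (hx0 : 0 ≤ x) (hx1 : x ≤ 1) :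
    |x ^ α - ((1/2:ℝ)^α + α*(1/2:ℝ)^(α-1)*(x-1/2) + α*(α-1)*(1/2:ℝ)^(α-2)*(x-1/2)^2/2)|
      ≤ 128 * |x-1/2|^3 + 1024 * (x-1/2)^4 := by
  by_cases hc : |x - 1/2| ≤ 1/4
  · have h := taylor_cubic α h0 h1 hc
    rw [show (1/2 + (x - 1/2) : ℝ) = x by ring] at h
    have : (0:ℝ) ≤ 1024 * (x-1/2)^4 := by positivity
    linarith
  · push_neg at hc
    set t := x - 1/2 with htdef
    have ht2 : |t| ≤ 1/2 := by
      rw [abs_le]; constructor <;> [skip; skip] <;> simp [htdef] <;> linarith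
    have hA0 : (0:ℝ) ≤ x ^ α := Real.rpow_nonneg hx0 _
    have hA1 : x ^ α ≤ 1 := Real.rpow_le_one hx0 hx1 h0.le
    have hB0 : (0:ℝ) ≤ (1/2:ℝ)^α := Real.rpow_nonneg (by norm_num) _
    have hB1 : (1/2:ℝ)^α ≤ 1 := Real.rpow_le_one (by norm_num) (by norm_num) h0.le
    have hC2 : (1/2:ℝ)^(α-1) ≤ 2 := by
      have := Real.rpow_le_rpow_of_exponent_ge (by norm_num : (0:ℝ) < 1/2) (by norm_num)
        (by linarith : (-1:ℝ) ≤ α - 1)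
      rw [Real.rpow_neg_one] at this
      norm_num at this ⊢
      linarith
    have hC0 : (0:ℝ) ≤ (1/2:ℝ)^(α-1) := Real.rpow_nonneg (by norm_num) _
    have hD4 : (1/2:ℝ)^(α-2) ≤ 4 := by
      have := Real.rpow_le_rpow_of_exponent_ge (by norm_num : (0:ℝ) < 1/2) (by norm_num)
        (by linarith : (-2:ℝ) ≤ α - 2)
      have h2 : ((1:ℝ)/2) ^ (-2:ℝ) = 4 := by
        rw [show (-2:ℝ) = -((2:ℕ):ℝ) by norm_num, Real.rpow_neg (by norm_num), Real.rpow_natCast]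
        norm_num
      rw [h2] at this; exact this
    have hD0 : (0:ℝ) ≤ (1/2:ℝ)^(α-2) := Real.rpow_nonneg (by norm_num) _
    -- |t| ≥ 1/4 so t^4 ≥ 1/256
    have ht4 : (1/256:ℝ) ≤ t^4 := by
      have h1' : (1/4:ℝ) ≤ |t| := le_of_lt hc
      have : (1/4:ℝ)^4 ≤ |t|^4 := pow_le_pow_left₀ (by norm_num) h1' 4
      rw [show |t|^4 = t^4 by rw [← abs_pow]; exact abs_of_nonneg (by positivity)] at this
      linarith
    have e1 : |α*(1/2:ℝ)^(α-1)*t| ≤ 1 := by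
      rw [abs_mul, abs_mul, abs_of_nonneg h0.le, abs_of_nonneg hC0]
      have p1 : α * (1/2:ℝ)^(α-1) ≤ 2 := by nlinarith
      have p0 : (0:ℝ) ≤ α * (1/2:ℝ)^(α-1) := by positivity
      calc α * (1/2:ℝ)^(α-1) * |t| ≤ 2 * (1/2) := mul_le_mul p1 ht2 (abs_nonneg t) (by norm_num)
        _ = 1 := by norm_num
    have e2 : |α*(α-1)*(1/2:ℝ)^(α-2)*t^2/2| ≤ 1/2 := by
      rw [abs_div, abs_mul, abs_mul, abs_mul, abs_of_nonneg h0.le, abs_of_nonneg hD0]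
      have ha2 : |α - 1| ≤ 1 := abs_le.mpr ⟨by linarith, by linarith⟩
      have htt : |t^2| ≤ 1/4 := by
        rw [abs_of_nonneg (sq_nonneg t)]
        nlinarith [abs_nonneg t, sq_abs t]
      rw [show |(2:ℝ)| = 2 by norm_num]
      rw [div_le_iff₀ (by norm_num : (0:ℝ) < 2)]
      have q1 : α * |α - 1| ≤ 1 := by have := mul_le_mul h1 ha2 (abs_nonneg (α-1)) zero_le_one; linarith
      have q0 : (0:ℝ) ≤ α * |α - 1| := by positivity
      have q2 : α * |α - 1| * (1/2:ℝ)^(α-2) ≤ 4 := by nlinarith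
      have q20 : (0:ℝ) ≤ α * |α - 1| * (1/2:ℝ)^(α-2) := by positivity
      calc α * |α-1| * (1/2:ℝ)^(α-2) * |t^2| ≤ 4 * (1/4) :=
            mul_le_mul q2 htt (abs_nonneg _) (by norm_num)
        _ ≤ 1/2 * 2 := by norm_num
    have habs3 : (0:ℝ) ≤ 128 * |t|^3 := by positivity
    calc |x ^ α - ((1/2:ℝ)^α + α*(1/2:ℝ)^(α-1)*t + α*(α-1)*(1/2:ℝ)^(α-2)*t^2/2)|
        ≤ |x ^ α| + |(1/2:ℝ)^α + α*(1/2:ℝ)^(α-1)*t + α*(α-1)*(1/2:ℝ)^(α-2)*t^2/2| :=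
          abs_sub _ _
      _ ≤ 1 + (1 + 1 + 1/2) := by
          gcongr ?_ + ?_
          · rw [abs_of_nonneg hA0]; exact hA1
          · calc |(1/2:ℝ)^α + α*(1/2:ℝ)^(α-1)*t + α*(α-1)*(1/2:ℝ)^(α-2)*t^2/2|
                ≤ |(1/2:ℝ)^α| + |α*(1/2:ℝ)^(α-1)*t| + |α*(α-1)*(1/2:ℝ)^(α-2)*t^2/2| := by
                  exact (abs_add_le _ _).trans (by gcongr; exact abs_add_le _ _)
              _ ≤ 1 + 1 + 1/2 := by
                  rw [abs_of_nonneg hB0]; gcongr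
      _ ≤ 1024 * (1/256) := by norm_num
      _ ≤ 1024 * t^4 := by linarith
      _ ≤ 128 * |t|^3 + 1024 * t^4 := by linarith

lemma main_est (α : ℝ) (h0 : 0 < α) (h1 : α ≤ 1) (d : ℕ) (hd : 4 ≤ d) :
    |(∑ n ∈ Finset.range (d + 1), (d.choose n : ℝ) * (1 / 2 ^ d) * ((n : ℝ) / d) ^ α)
        - (1/2:ℝ)^α * (1 + (α*(α-1)/2)/d)|
      ≤ 220 / ((d:ℝ) * Real.sqrt d) := by
  have hd0 : (0:ℝ) < d := by
    have : (4:ℝ) ≤ d := by exact_mod_cast hd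
    linarith
  have hdne : (d:ℝ) ≠ 0 := hd0.ne'
  set r := Real.sqrt d with hrdef
  have hr2 : r^2 = (d:ℝ) := Real.sq_sqrt hd0.le
  have hr : (2:ℝ) ≤ r := by
    rw [hrdef, show (2:ℝ) = Real.sqrt 4 by
      rw [show (4:ℝ) = 2^2 by norm_num, Real.sqrt_sq (by norm_num)]]
    exact Real.sqrt_le_sqrt (by exact_mod_cast hd)
  have hrpos : (0:ℝ) < r := by linarith
  have h2d : (0:ℝ) < 2^d := by positivity
  set t : ℕ → ℝ := fun n => (n:ℝ)/d - 1/2 with htdef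
  set Pt : ℕ → ℝ := fun n =>
    (1/2:ℝ)^α + α*(1/2:ℝ)^(α-1)*(t n) + α*(α-1)*(1/2:ℝ)^(α-2)*(t n)^2/2 with hPtdef
  have hhalf : (1/2:ℝ)^(α-2) = (1/2:ℝ)^α * 4 := by
    rw [Real.rpow_sub (by norm_num : (0:ℝ) < 1/2)]
    rw [show ((1:ℝ)/2) ^ (2:ℝ) = 1/4 by
      rw [show (2:ℝ) = ((2:ℕ):ℝ) by norm_num, Real.rpow_natCast]; norm_num]
    field_simp
  have hPsum : ∑ n ∈ Finset.range (d+1), (d.choose n : ℝ) * Pt n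
      = 2^d * ((1/2:ℝ)^α * (1 + (α*(α-1)/2)/d)) := by
    have e : ∀ n ∈ Finset.range (d+1), (d.choose n : ℝ) * Pt n
        = (d.choose n : ℝ) * ((1/2:ℝ)^α)
          + ((d.choose n : ℝ) * ((n:ℝ)/d - 1/2)) * (α*(1/2:ℝ)^(α-1))
          + ((d.choose n : ℝ) * ((n:ℝ)/d - 1/2)^2) * (α*(α-1)*(1/2:ℝ)^(α-2)/2) := by
      intro n _; rw [hPtdef]; ring
    rw [Finset.sum_congr rfl e, Finset.sum_add_distrib, Finset.sum_add_distrib,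
      ← Finset.sum_mul, ← Finset.sum_mul, ← Finset.sum_mul,
      sumA d, sumT d hd, sumQ d hd, hhalf]
    field_simp
    ring
  have hptw : ∀ n ∈ Finset.range (d+1),
      |(d.choose n : ℝ) * ((n : ℝ) / d) ^ α - (d.choose n : ℝ) * Pt n|
        ≤ (d.choose n : ℝ) * (128 * |t n|^3 + 1024 * (t n)^4) := by
    intro n hn
    have hn' : n ≤ d := by
      have := Finset.mem_range.mp hn; omega
    have hx0 : (0:ℝ) ≤ (n:ℝ)/d := by positivity
    have hx1 : (n:ℝ)/d ≤ 1 := by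
      rw [div_le_one hd0]; exact_mod_cast hn'
    have hu := unif_bound α h0 h1 hx0 hx1
    rw [← mul_sub, abs_mul, abs_of_nonneg (by positivity : (0:ℝ) ≤ (d.choose n:ℝ))]
    exact mul_le_mul_of_nonneg_left hu (by positivity)
  have habs3 : ∑ n ∈ Finset.range (d+1), (d.choose n : ℝ) * |t n|^3
      ≤ 7/32 * 2^d / ((d:ℝ) * r) := by
    have e : ∀ n ∈ Finset.range (d+1), (d.choose n : ℝ) * |t n|^3
        ≤ ((d.choose n : ℝ) * (t n)^2) * (1/(2*r)) + ((d.choose n : ℝ) * (t n)^4) * (r/2) := by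
      intro n _
      have key : |t n|^3 ≤ (t n)^2 * (1/(2*r)) + (t n)^4 * (r/2) := by
        have h1' : (t n)^2 = |t n|^2 := (sq_abs _).symm
        have h2' : (t n)^4 = |t n|^4 := by rw [← abs_pow, abs_of_nonneg (by positivity)]
        rw [h1', h2', show |t n|^2 * (1/(2*r)) + |t n|^4 * (r/2)
            = (|t n|^2 + r^2 * |t n|^4)/(2*r) by field_simp,
          le_div_iff₀ (by positivity)]
        nlinarith [sq_nonneg (|t n| - r * |t n|^2), abs_nonneg (t n)]
      calc (d.choose n : ℝ) * |t n|^3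
          ≤ (d.choose n : ℝ) * ((t n)^2 * (1/(2*r)) + (t n)^4 * (r/2)) :=
            mul_le_mul_of_nonneg_left key (by positivity)
        _ = ((d.choose n : ℝ) * (t n)^2) * (1/(2*r)) + ((d.choose n : ℝ) * (t n)^4) * (r/2) := by
            ring
    have hsum2 : ∑ n ∈ Finset.range (d+1), (d.choose n : ℝ) * (t n)^2 = 2^d/(4*(d:ℝ)) := sumQ d hd
    have hsum4 : ∑ n ∈ Finset.range (d+1), (d.choose n : ℝ) * (t n)^4
        = 2^d * (3*(d:ℝ)-2)/(16*(d:ℝ)^3) := sumF d hd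
    calc ∑ n ∈ Finset.range (d+1), (d.choose n : ℝ) * |t n|^3
        ≤ ∑ n ∈ Finset.range (d+1),
            (((d.choose n : ℝ) * (t n)^2) * (1/(2*r)) + ((d.choose n : ℝ) * (t n)^4) * (r/2)) :=
          Finset.sum_le_sum e
      _ = (2^d/(4*(d:ℝ))) * (1/(2*r)) + (2^d * (3*(d:ℝ)-2)/(16*(d:ℝ)^3)) * (r/2) := by
          rw [Finset.sum_add_distrib, ← Finset.sum_mul, ← Finset.sum_mul, hsum2, hsum4]
      _ = 2^d * ((4*r^2 + (3*r^2 - 2))/(32*r^5)) := by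
          rw [← hr2]; field_simp; ring
      _ ≤ 2^d * (7*r^2/(32*r^5)) := by
          apply mul_le_mul_of_nonneg_left _ h2d.le
          apply div_le_div_of_nonneg_right ?_ (by positivity)
          · linarith
      _ = 7/32 * 2^d / ((d:ℝ) * r) := by
          rw [← hr2]; field_simp
  -- total error bound (unnormalized)
  have hdiff : |(∑ n ∈ Finset.range (d+1), (d.choose n : ℝ) * ((n : ℝ) / d) ^ α)
      - (∑ n ∈ Finset.range (d+1), (d.choose n : ℝ) * Pt n)|
      ≤ 128 * (∑ n ∈ Finset.range (d+1), (d.choose n : ℝ) * |t n|^3)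
        + 1024 * (∑ n ∈ Finset.range (d+1), (d.choose n : ℝ) * (t n)^4) := by
    rw [← Finset.sum_sub_distrib]
    refine (Finset.abs_sum_le_sum_abs _ _).trans ?_
    refine (Finset.sum_le_sum hptw).trans ?_
    rw [Finset.mul_sum, Finset.mul_sum, ← Finset.sum_add_distrib]
    exact le_of_eq (Finset.sum_congr rfl fun n _ => by ring)
  have htot : |(∑ n ∈ Finset.range (d+1), (d.choose n : ℝ) * ((n : ℝ) / d) ^ α)
      - 2^d * ((1/2:ℝ)^α * (1 + (α*(α-1)/2)/d))|
      ≤ 2^d * (220/((d:ℝ)*r)) := by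
    rw [← hPsum]
    refine hdiff.trans ?_
    have b1 : 128 * (∑ n ∈ Finset.range (d+1), (d.choose n : ℝ) * |t n|^3)
        ≤ 128 * (7/32 * 2^d / ((d:ℝ) * r)) := by linarith
    have b2 : 1024 * (∑ n ∈ Finset.range (d+1), (d.choose n : ℝ) * (t n)^4)
        = 1024 * (2^d * (3*(d:ℝ)-2)/(16*(d:ℝ)^3)) := by rw [sumF d hd]
    have b3 : 128 * (7/32 * 2^d / ((d:ℝ) * r)) + 1024 * (2^d * (3*(d:ℝ)-2)/(16*(d:ℝ)^3))
        = 2^d * ((28*r^3 + 64*(3*r^2-2))/r^6) := by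
      rw [← hr2]; field_simp; ring
    have b4 : 2^d * ((28*r^3 + 64*(3*r^2-2))/r^6) ≤ 2^d * (220*r^3/r^6) := by
      apply mul_le_mul_of_nonneg_left _ h2d.le
      apply div_le_div_of_nonneg_right ?_ (by positivity)
      · nlinarith
    have b5 : 2^d * (220*r^3/r^6) = 2^d * (220/((d:ℝ)*r)) := by
      rw [← hr2]; field_simp
    linarith
  -- normalize
  have hSf : (∑ n ∈ Finset.range (d + 1), (d.choose n : ℝ) * (1 / 2 ^ d) * ((n : ℝ) / d) ^ α)
      = (1/2^d) * ∑ n ∈ Finset.range (d+1), (d.choose n : ℝ) * ((n : ℝ) / d) ^ α := by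
    rw [Finset.mul_sum]
    exact Finset.sum_congr rfl fun n _ => by ring
  have hQ : (1/2:ℝ)^α * (1 + (α*(α-1)/2)/d)
      = (1/2^d) * (2^d * ((1/2:ℝ)^α * (1 + (α*(α-1)/2)/d))) := by
    field_simp
  rw [hSf, hQ, ← mul_sub, abs_mul, abs_of_nonneg (by positivity : (0:ℝ) ≤ 1/2^d)]
  calc (1/2^d) * |(∑ n ∈ Finset.range (d+1), (d.choose n : ℝ) * ((n : ℝ) / d) ^ α)
        - 2^d * ((1/2:ℝ)^α * (1 + (α*(α-1)/2)/d))|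
      ≤ (1/2^d) * (2^d * (220/((d:ℝ)*r))) := mul_le_mul_of_nonneg_left htot (by positivity)
    _ = 220 / ((d:ℝ) * r) := by field_simp

/-- Let `B_d ~ Binomial(d, 1/2)` and `F(n) = (n/d)^{s/2}` (with `F(0) = 0`)
for fixed `s ∈ (0,2]`. Then as `d → ∞`,
`E[F(B_d)] = 2^{−s/2} (1 + C(s/2,2)/d + o(1/d))` where `C(s/2,2) = (s/2)(s/2−1)/2`.
Here `E[F(B_d)] = ∑_{n=0}^d C(d,n) 2^{−d} (n/d)^{s/2}` (for `s > 0` the `n = 0` term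
vanishes automatically). -/
theorem binomial_rpow_moment_asymptotics (s : ℝ) (hs0 : 0 < s) (hs2 : s ≤ 2) :
    ∃ e : ℕ → ℝ, Tendsto (fun d : ℕ => (d : ℝ) * e d) atTop (nhds 0) ∧
      ∀ d : ℕ, 1 ≤ d →
        (∑ n ∈ Finset.range (d + 1),
            (d.choose n : ℝ) * (1 / 2 ^ d) * ((n : ℝ) / d) ^ (s / 2))
          = 2 ^ (-(s / 2)) *
              (1 + ((s / 2) * (s / 2 - 1) / 2) / d + e d) := by
  have hα0 : 0 < s/2 := by linarith
  have hα1 : s/2 ≤ 1 := by linarith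
  have hBpos : (0:ℝ) < (2:ℝ) ^ (-(s/2)) := Real.rpow_pos_of_pos two_pos _
  have hB : (2:ℝ)^(-(s/2)) = (1/2:ℝ)^(s/2) := by
    rw [Real.rpow_neg (by norm_num : (0:ℝ) ≤ 2), ← Real.inv_rpow (by norm_num : (0:ℝ) ≤ 2)]
    norm_num
  have hBinv : ((2:ℝ)^(-(s/2)))⁻¹ ≤ 2 := by
    rw [← Real.rpow_neg (by norm_num : (0:ℝ) ≤ 2), neg_neg]
    calc (2:ℝ)^(s/2) ≤ (2:ℝ)^(1:ℝ) :=
          Real.rpow_le_rpow_of_exponent_le (by norm_num) hα1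
      _ = 2 := Real.rpow_one 2
  refine ⟨fun d => if d = 0 then 0 else
      (∑ n ∈ Finset.range (d + 1),
        (d.choose n : ℝ) * (1 / 2 ^ d) * ((n : ℝ) / d) ^ (s / 2)) / (2:ℝ) ^ (-(s / 2))
        - 1 - ((s / 2) * (s / 2 - 1) / 2) / d, ?_, ?_⟩
  · -- tendsto
    have hsq : Tendsto (fun d : ℕ => Real.sqrt d) atTop atTop := by
      have h1 : Tendsto (fun x : ℝ => x ^ (1/2:ℝ)) atTop atTop :=
        tendsto_rpow_atTop (by norm_num)
      exact (h1.comp tendsto_natCast_atTop_atTop).congr fun d => by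
        simp only [Function.comp_apply]; rw [← Real.sqrt_eq_rpow]
    apply squeeze_zero_norm' (a := fun d : ℕ => 440 / Real.sqrt d)
    · filter_upwards [eventually_ge_atTop 4] with d hd
      have hd0 : (0:ℝ) < d := by
        have : (4:ℝ) ≤ d := by exact_mod_cast hd
        linarith
      have hrpos : (0:ℝ) < Real.sqrt d := Real.sqrt_pos.mpr hd0
      have hest := main_est (s/2) hα0 hα1 d hd
      simp only [if_neg (show ¬ d = 0 by omega)]
      set Sd := ∑ n ∈ Finset.range (d + 1),
        (d.choose n : ℝ) * (1 / 2 ^ d) * ((n : ℝ) / d) ^ (s / 2) with hSd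
      have heq : Sd / (2:ℝ) ^ (-(s / 2)) - 1 - ((s / 2) * (s / 2 - 1) / 2) / d
          = (Sd - (2:ℝ)^(-(s/2)) * (1 + ((s/2)*(s/2-1)/2)/d)) * ((2:ℝ)^(-(s/2)))⁻¹ := by
        field_simp
        ring
      rw [heq]
      have habs : |Sd - (2:ℝ)^(-(s/2)) * (1 + ((s/2)*(s/2-1)/2)/d)| ≤ 220 / ((d:ℝ) * Real.sqrt d) := by
        rw [hB]
        have : (s/2) * ((s/2)-1)/2 = (s/2)*(s/2-1)/2 := by ring
        simpa [this] using hest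
      rw [Real.norm_eq_abs, abs_mul, abs_mul, abs_of_pos hd0,
        abs_of_nonneg (inv_nonneg.mpr hBpos.le)]
      calc (d:ℝ) * (|Sd - (2:ℝ)^(-(s/2)) * (1 + ((s/2)*(s/2-1)/2)/d)| * ((2:ℝ)^(-(s/2)))⁻¹)
          ≤ (d:ℝ) * ((220 / ((d:ℝ) * Real.sqrt d)) * 2) := by
            apply mul_le_mul_of_nonneg_left _ hd0.le
            exact mul_le_mul habs hBinv (inv_nonneg.mpr hBpos.le) (by positivity)
        _ = 440 / Real.sqrt d := by field_simp; ring
    · exact Filter.Tendsto.div_atTop tendsto_const_nhds hsq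
  · intro d hd
    simp only [if_neg (show ¬ d = 0 by omega)]
    have hdne : (d:ℝ) ≠ 0 := by
      exact_mod_cast Nat.cast_ne_zero.mpr (by omega)
    field_simp
    ring
end
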